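/- arXiv:1301.6061 — 5 statements merged into one kernel-verified Lean document; each statement's English description precedes it below -/
import Mathlib

section
/- For r > 0 and Ψ_β(q) = r√(1−2β)q^(−β) on (0,1] extended by zero, the L²(0,2) norm of the autoconvolution satisfies ‖Ψ_β * Ψ_β‖_{L²(0,2)} ≤ √2 · r² · (1−2β) · π · 2^{1−2β}, and hence ‖Ψ_β * Ψ_β‖_{L²(0,2)} → 0 as β → 1/2 from below. -/
open MeasureTheory Set Filter

/-- `Ψ_β(q) = r √(1-2β) q^(-β)` on `(0,1]`, extended by zero. -/
noncomputable def Psi (r β : ℝ) (q : ℝ) : ℝ :=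
  if q ∈ Ioc (0:ℝ) 1 then r * Real.sqrt (1 - 2*β) * q ^ (-β) else 0

/-- The autoconvolution `[Ψ_β * Ψ_β](s) = ∫₀ˢ Ψ_β(s-q) Ψ_β(q) dq`. -/
noncomputable def PsiConv (r β : ℝ) (s : ℝ) : ℝ :=
  ∫ q in Ioc (0:ℝ) s, Psi r β (s - q) * Psi r β q

open intervalIntegral in

lemma sqrtint_integrable {s : ℝ} (hs : 0 < s) :
    IntervalIntegrable (fun q : ℝ => ((s - q) * q) ^ (-(1/2) : ℝ)) volume 0 s := by
  have hmeas : AEStronglyMeasurable (fun q : ℝ => ((s - q) * q) ^ (-(1/2) : ℝ))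
      (volume.restrict (Set.uIoc (0:ℝ) s)) := by
    apply Measurable.aestronglyMeasurable
    fun_prop
  have hg : IntervalIntegrable
      (fun q : ℝ => (s/2) ^ (-(1/2) : ℝ) * (q ^ (-(1/2) : ℝ) + (s - q) ^ (-(1/2) : ℝ)))
      volume 0 s := by
    apply IntervalIntegrable.const_mul
    apply IntervalIntegrable.add
    · exact intervalIntegrable_rpow' (by norm_num)
    · have := (intervalIntegrable_rpow' (r := -(1/2)) (by norm_num) (a := 0) (b := s)).comp_sub_left s
      simpa using this.symm
  refine hg.mono_fun hmeas ?_
  rw [Set.uIoc_of_le hs.le, Filter.EventuallyLE,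
    ae_restrict_iff' measurableSet_Ioc]
  filter_upwards with q hq
  obtain ⟨hq0, hqs⟩ := hq
  have hsq : 0 ≤ s - q := by linarith
  have h1 : ((s - q) * q) ^ (-(1/2) : ℝ) = (s - q) ^ (-(1/2) : ℝ) * q ^ (-(1/2) : ℝ) :=
    Real.mul_rpow hsq hq0.le
  have hhalf : (0:ℝ) < s/2 := by linarith
  have hb : ((s - q) * q) ^ (-(1/2) : ℝ)
      ≤ (s/2) ^ (-(1/2) : ℝ) * (q ^ (-(1/2) : ℝ) + (s - q) ^ (-(1/2) : ℝ)) := by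
    rcases le_total q (s/2) with h | h
    · have : (s - q) ^ (-(1/2) : ℝ) ≤ (s/2) ^ (-(1/2) : ℝ) :=
        Real.rpow_le_rpow_of_nonpos hhalf (by linarith) (by norm_num)
      rw [h1]
      have hqn : (0:ℝ) ≤ q ^ (-(1/2) : ℝ) := Real.rpow_nonneg hq0.le _
      nlinarith [Real.rpow_nonneg hsq (-(1/2) : ℝ), Real.rpow_nonneg hhalf.le (-(1/2) : ℝ)]
    · have : q ^ (-(1/2) : ℝ) ≤ (s/2) ^ (-(1/2) : ℝ) :=
        Real.rpow_le_rpow_of_nonpos hhalf (by linarith) (by norm_num)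
      rw [h1]
      have hqn : (0:ℝ) ≤ (s - q) ^ (-(1/2) : ℝ) := Real.rpow_nonneg hsq _
      nlinarith [Real.rpow_nonneg hq0.le (-(1/2) : ℝ), Real.rpow_nonneg hhalf.le (-(1/2) : ℝ)]
  have hL : ‖((s - q) * q) ^ (-(1/2) : ℝ)‖ = ((s - q) * q) ^ (-(1/2) : ℝ) :=
    Real.norm_of_nonneg (Real.rpow_nonneg (mul_nonneg hsq hq0.le) _)
  rw [hL, Real.norm_of_nonneg]
  · exact hb
  · positivity

lemma key_integral {s : ℝ} (hs : 0 < s) :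
    ∫ q in Set.Ioc (0:ℝ) s, ((s - q) * q) ^ (-(1/2) : ℝ) = Real.pi := by
  have h := intervalIntegral.integral_eq_sub_of_hasDeriv_right_of_le hs.le
    (f := fun q => Real.arcsin (2*q/s - 1))
    (f' := fun q => ((s - q) * q) ^ (-(1/2) : ℝ))
    ((Real.continuous_arcsin.comp (by continuity)).continuousOn)
    (fun q hq => by
      obtain ⟨hq0, hqs⟩ := hq
      have hx1 : 2*q/s - 1 ≠ -1 := by
        have : 0 < 2*q/s := by positivity
        intro h; rw [sub_eq_neg_self] at h; simp at h; rcases h with h|h <;> linarith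
      have hx2 : 2*q/s - 1 ≠ 1 := by
        have : 2*q/s < 2 := by rw [div_lt_iff₀ hs]; linarith
        intro h; rw [sub_eq_iff_eq_add] at h; linarith
      have hin : HasDerivAt (fun q : ℝ => 2*q/s - 1) (2/s) q := by
        simpa using ((hasDerivAt_id q).const_mul 2 |>.div_const s).sub_const 1
      have := (Real.hasDerivAt_arcsin hx1 hx2).comp q hin
      convert this.hasDerivWithinAt using 1
      · rfl
      have hX : (0:ℝ) < (s - q) * q := by nlinarith
      have he : 1 - (2*q/s - 1)^2 = (4/s^2) * ((s - q) * q) := by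
        field_simp; ring
      have h4 : Real.sqrt (4/s^2) = 2/s := by
        rw [show (4:ℝ)/s^2 = (2/s)^2 by ring]
        exact Real.sqrt_sq (by positivity)
      have hsX : (0:ℝ) < Real.sqrt ((s - q) * q) := Real.sqrt_pos.mpr hX
      show ((s - q) * q) ^ (-(1/2) : ℝ) = _
      rw [he, Real.sqrt_mul (by positivity), h4, Real.rpow_neg hX.le, ← Real.sqrt_eq_rpow]
      field_simp)
    (sqrtint_integrable hs)
  rw [← intervalIntegral.integral_of_le hs.le, h]
  have h1 : 2*s/s - 1 = 1 := by field_simp; norm_num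
  have h0 : 2*(0:ℝ)/s - 1 = -1 := by simp
  simp only [h1, h0, Real.arcsin_one, Real.arcsin_neg_one]
  ring

lemma Psi_nonneg (r β q : ℝ) (hr : 0 ≤ r) : 0 ≤ Psi r β q := by
  unfold Psi
  split_ifs with h
  · exact mul_nonneg (mul_nonneg hr (Real.sqrt_nonneg _)) (Real.rpow_nonneg h.1.le _)
  · exact le_refl 0

lemma Psi_le (r β x : ℝ) (hr : 0 ≤ r) (hx : 0 < x) :
    Psi r β x ≤ r * Real.sqrt (1 - 2*β) * x ^ (-β) := by
  unfold Psi
  split_ifs with h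
  · exact le_refl _
  · exact mul_nonneg (mul_nonneg hr (Real.sqrt_nonneg _)) (Real.rpow_nonneg hx.le _)

lemma conv_nonneg (r β s : ℝ) (hr : 0 ≤ r) : 0 ≤ PsiConv r β s :=
  setIntegral_nonneg measurableSet_Ioc fun q _ =>
    mul_nonneg (Psi_nonneg r β _ hr) (Psi_nonneg r β _ hr)

lemma conv_le (r β s : ℝ) (hr : 0 ≤ r) (hβ0 : 0 < β) (hβ : β < 1/2)
    (hs0 : 0 < s) (hs2 : s ≤ 2) :
    PsiConv r β s ≤ r^2 * (1 - 2*β) * Real.pi := by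
  have h2β : (0:ℝ) ≤ 1 - 2*β := by linarith
  set c : ℝ := r^2 * (1 - 2*β) with hc
  have hc0 : 0 ≤ c := mul_nonneg (sq_nonneg r) h2β
  have hGint : IntegrableOn (fun q : ℝ => c * ((s - q) * q) ^ (-(1/2) : ℝ)) (Ioc 0 s) :=
    ((sqrtint_integrable hs0).1).const_mul c
  have hmono : PsiConv r β s ≤ ∫ q in Ioc (0:ℝ) s, c * ((s - q) * q) ^ (-(1/2) : ℝ) := by
    apply integral_mono_of_nonneg
    · exact Filter.Eventually.of_forall fun q =>
        mul_nonneg (Psi_nonneg r β _ hr) (Psi_nonneg r β _ hr)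
    · exact hGint
    · rw [Filter.EventuallyLE, ae_restrict_iff' measurableSet_Ioc]
      filter_upwards with q hq
      obtain ⟨hq0, hqs⟩ := hq
      rcases eq_or_lt_of_le hqs with heq | hlt
      · have : Psi r β (s - q) = 0 := by
          unfold Psi
          rw [← heq]
          simp
        rw [this, zero_mul]
        exact mul_nonneg hc0 (Real.rpow_nonneg (mul_nonneg (by linarith) hq0.le) _)
      · have hsq : 0 < s - q := by linarith
        have hX : 0 < (s - q) * q := mul_pos hsq hq0
        have hX1 : (s - q) * q ≤ 1 := by nlinarith [sq_nonneg (s - 2*q)]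
        calc Psi r β (s - q) * Psi r β q
            ≤ (r * Real.sqrt (1 - 2*β) * (s - q) ^ (-β)) *
              (r * Real.sqrt (1 - 2*β) * q ^ (-β)) := by
              apply mul_le_mul (Psi_le r β _ hr hsq) (Psi_le r β _ hr hq0)
                (Psi_nonneg r β _ hr)
              exact mul_nonneg (mul_nonneg hr (Real.sqrt_nonneg _))
                (Real.rpow_nonneg hsq.le _)
          _ = r^2 * (Real.sqrt (1 - 2*β) * Real.sqrt (1 - 2*β)) *
              ((s - q) ^ (-β) * q ^ (-β)) := by ring
          _ = c * ((s - q) * q) ^ (-β) := by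
              rw [Real.mul_self_sqrt h2β, ← Real.mul_rpow hsq.le hq0.le, hc]
          _ ≤ c * ((s - q) * q) ^ (-(1/2) : ℝ) := by
              apply mul_le_mul_of_nonneg_left _ hc0
              exact Real.rpow_le_rpow_of_exponent_ge hX hX1 (by linarith)
  calc PsiConv r β s ≤ ∫ q in Ioc (0:ℝ) s, c * ((s - q) * q) ^ (-(1/2) : ℝ) := hmono
    _ = c * ∫ q in Ioc (0:ℝ) s, ((s - q) * q) ^ (-(1/2) : ℝ) := integral_const_mul c _
    _ = c * Real.pi := by rw [key_integral hs0]

lemma main_bound (r β : ℝ) (hr : 0 ≤ r) (hβ0 : 0 < β) (hβ : β < 1/2) :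
    Real.sqrt (∫ s in Ioc (0:ℝ) 2, (PsiConv r β s)^2)
      ≤ Real.sqrt 2 * (r^2 * (1 - 2*β) * Real.pi) := by
  have h2β : (0:ℝ) ≤ 1 - 2*β := by linarith
  set M : ℝ := r^2 * (1 - 2*β) * Real.pi with hM
  have hM0 : 0 ≤ M := by positivity
  have hI : (∫ s in Ioc (0:ℝ) 2, (PsiConv r β s)^2) ≤ 2 * M^2 := by
    have h1 : (∫ s in Ioc (0:ℝ) 2, (PsiConv r β s)^2)
        ≤ ∫ _ in Ioc (0:ℝ) 2, M^2 := by
      apply integral_mono_of_nonneg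
      · exact Filter.Eventually.of_forall fun s => sq_nonneg _
      · exact integrableOn_const (by rw [Real.volume_Ioc]; exact ENNReal.ofReal_ne_top) (by simp)
      · rw [Filter.EventuallyLE, ae_restrict_iff' measurableSet_Ioc]
        filter_upwards with s hs
        exact pow_le_pow_left₀ (conv_nonneg r β s hr)
          (conv_le r β s hr hβ0 hβ hs.1 hs.2) 2
    have h2 : (∫ _ in Ioc (0:ℝ) 2, M^2) = 2 * M^2 := by
      rw [setIntegral_const, Real.volume_real_Ioc, smul_eq_mul]
      norm_num
    linarith
  calc Real.sqrt (∫ s in Ioc (0:ℝ) 2, (PsiConv r β s)^2)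
      ≤ Real.sqrt (2 * M^2) := Real.sqrt_le_sqrt hI
    _ = Real.sqrt 2 * M := by
        rw [Real.sqrt_mul (by norm_num), Real.sqrt_sq hM0]

/-- For `r > 0`, the `L²(0,2)` norm of the autoconvolution of `Ψ_β` satisfies
`‖Ψ_β * Ψ_β‖ ≤ √2 r² (1-2β) π 2^(1-2β)`, and hence tends to `0` as `β → 1/2` from below. -/
theorem stmt3 (r : ℝ) (hr : 0 < r) :
    (∀ β ∈ Ioo (0:ℝ) (1/2),
      Real.sqrt (∫ s in Ioc (0:ℝ) 2, (PsiConv r β s)^2)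
        ≤ Real.sqrt 2 * r^2 * (1 - 2*β) * Real.pi * (2:ℝ) ^ (1 - 2*β)) ∧
    Tendsto (fun β : ℝ => Real.sqrt (∫ s in Ioc (0:ℝ) 2, (PsiConv r β s)^2))
      (nhdsWithin (1/2) (Ioo (0:ℝ) (1/2))) (nhds 0) := by
  have part1 : ∀ β ∈ Ioo (0:ℝ) (1/2),
      Real.sqrt (∫ s in Ioc (0:ℝ) 2, (PsiConv r β s)^2)
        ≤ Real.sqrt 2 * r^2 * (1 - 2*β) * Real.pi * (2:ℝ) ^ (1 - 2*β) := by
    intro β hβ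
    have h2β : (0:ℝ) ≤ 1 - 2*β := by linarith [hβ.2]
    have h1 : (1:ℝ) ≤ (2:ℝ) ^ (1 - 2*β) :=
      Real.one_le_rpow (by norm_num) h2β
    have hmb := main_bound r β hr.le hβ.1 hβ.2
    calc Real.sqrt (∫ s in Ioc (0:ℝ) 2, (PsiConv r β s)^2)
        ≤ Real.sqrt 2 * (r^2 * (1 - 2*β) * Real.pi) := hmb
      _ = Real.sqrt 2 * r^2 * (1 - 2*β) * Real.pi := by ring
      _ ≤ Real.sqrt 2 * r^2 * (1 - 2*β) * Real.pi * (2:ℝ) ^ (1 - 2*β) := by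
          apply le_mul_of_one_le_right _ h1
          positivity
  refine ⟨part1, ?_⟩
  set g : ℝ → ℝ := fun β => Real.sqrt 2 * r^2 * (1 - 2*β) * Real.pi * (2:ℝ) ^ (1 - 2*β)
    with hg
  have hge : ∀ β : ℝ, g β =
      Real.sqrt 2 * r^2 * (1 - 2*β) * Real.pi * Real.exp (Real.log 2 * (1 - 2*β)) := by
    intro β
    rw [hg]
    simp only [Real.rpow_def_of_pos (by norm_num : (0:ℝ) < 2)]
  have hgc : ContinuousAt g (1/2) := by
    have : Continuous g := by
      rw [funext hge]
      fun_prop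
    exact this.continuousAt
  have hg0 : g (1/2) = 0 := by
    rw [hg]
    norm_num
  have hgt : Tendsto g (nhdsWithin (1/2) (Ioo (0:ℝ) (1/2))) (nhds 0) := by
    rw [← hg0]
    exact hgc.tendsto.mono_left nhdsWithin_le_nhds
  apply tendsto_of_tendsto_of_tendsto_of_le_of_le' tendsto_const_nhds hgt
  · exact Filter.Eventually.of_forall fun β => Real.sqrt_nonneg _
  · exact eventually_mem_nhdsWithin.mono fun β hβ => part1 β hβ
end

section
/- Let k : [0,2]×[0,1] → ℂ be continuous with k_max := max |k(s,q)|, and let F be the kernel-based autoconvolution operator [F(x)](s) = ∫₀ˢ k(s,q)x(s−q)x(q) dq. Then F : L²_ℂ(0,1) → L²_ℂ(0,2) is locally ill-posed at every point x₀ ∈ L²_ℂ(0,1): for every x₀ and every r > 0 there is a sequence (xₙ) with ‖xₙ − x₀‖_{L²(0,1)} = r for all n, but ‖F(xₙ) − F(x₀)‖_{L²(0,2)} → 0 as n → ∞. -/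
open MeasureTheory Set Filter
open scoped ENNReal
set_option maxHeartbeats 1000000

private lemma cs_aux {μ : Measure ℝ} (f g : ℝ → ℂ) (hf : MemLp f 2 μ) (hg : MemLp g 2 μ) :
    ∫ q, ‖f q‖ * ‖g q‖ ∂μ ≤
      Real.sqrt (∫ q, ‖f q‖ ^ 2 ∂μ) * Real.sqrt (∫ q, ‖g q‖ ^ 2 ∂μ) := by
  have hconj : (2:ℝ).HolderConjugate 2 := Real.HolderConjugate.two_two
  have h2 : ENNReal.ofReal (2:ℝ) = 2 := by norm_num
  have := integral_mul_le_Lp_mul_Lq_of_nonneg (μ := μ) hconj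
    (Eventually.of_forall fun q => norm_nonneg (f q))
    (Eventually.of_forall fun q => norm_nonneg (g q)) (h2 ▸ hf.norm) (h2 ▸ hg.norm)
  calc ∫ q, ‖f q‖ * ‖g q‖ ∂μ
      ≤ (∫ q, ‖f q‖ ^ (2:ℝ) ∂μ) ^ (1/(2:ℝ)) * (∫ q, ‖g q‖ ^ (2:ℝ) ∂μ) ^ (1/(2:ℝ)) := this
    _ = Real.sqrt (∫ q, ‖f q‖ ^ 2 ∂μ) * Real.sqrt (∫ q, ‖g q‖ ^ 2 ∂μ) := by
        rw [Real.sqrt_eq_rpow, Real.sqrt_eq_rpow]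
        norm_num [Real.rpow_natCast]

private lemma mul_int {μ : Measure ℝ} (f g : ℝ → ℝ) (hf : MemLp f 2 μ) (hg : MemLp g 2 μ) :
    Integrable (fun t => f t * g t) μ := by
  have h : (1:ℝ≥0∞)/1 = 1/2 + 1/2 := by
    rw [ENNReal.div_add_div_same]; norm_num
    rw [ENNReal.div_self (by norm_num) (by norm_num)]
  have := (hg.smul hf : MemLp (f • g) 1 μ)
  simpa [smul_eq_mul, Pi.mul_def] using memLp_one_iff_integrable.mp this

private lemma mul_intC {μ : Measure ℝ} (f g : ℝ → ℂ) (hf : MemLp f 2 μ) (hg : MemLp g 2 μ) :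
    Integrable (fun t => f t * g t) μ := by
  have h : (1:ℝ≥0∞)/1 = 1/2 + 1/2 := by
    rw [ENNReal.div_add_div_same]; norm_num
    rw [ENNReal.div_self (by norm_num) (by norm_num)]
  have := (hg.smul hf : MemLp (f • g) 1 μ)
  simpa [smul_eq_mul, Pi.mul_def] using memLp_one_iff_integrable.mp this

/-- The kernel-based autoconvolution operator `F : L²_ℂ(0,1) → L²_ℂ(0,2)` with continuous kernel
`k` is locally ill-posed at every point `x₀`: for every `x₀` and every `r > 0` there is a
sequence `(xₙ)` at distance exactly `r` from `x₀` in `L²(0,1)` with `F(xₙ) → F(x₀)` in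
`L²(0,2)`. -/
theorem stmt5 (k : ℝ → ℝ → ℂ)
    (hk : ContinuousOn (Function.uncurry k) (Icc (0:ℝ) 2 ×ˢ Icc (0:ℝ) 1))
    (hk0 : ∀ s q : ℝ, (s, q) ∉ Icc (0:ℝ) 2 ×ˢ Icc (0:ℝ) 1 → k s q = 0)
    (F : (ℝ → ℂ) → ℝ → ℂ)
    (hF : ∀ x s, F x s = ∫ q in Ioc (0:ℝ) s, k s q * x (s - q) * x q)
    (x₀ : ℝ → ℂ) (hx₀m : AEStronglyMeasurable x₀ volume)
    (hx₀ : MemLp x₀ 2 (volume.restrict (Ioc (0:ℝ) 1)))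
    (hx₀0 : ∀ t : ℝ, t ∉ Icc (0:ℝ) 1 → x₀ t = 0)
    (r : ℝ) (hr : 0 < r) :
    ∃ xn : ℕ → ℝ → ℂ,
      (∀ n, Real.sqrt (∫ q in Ioc (0:ℝ) 1, ‖xn n q - x₀ q‖^2) = r) ∧
      Tendsto (fun n => Real.sqrt (∫ s in Ioc (0:ℝ) 2, ‖F (xn n) s - F x₀ s‖^2))
        atTop (nhds 0) := by
  classical
  -- bound on the kernel
  obtain ⟨K₀, hK₀⟩ := (isCompact_Icc.prod isCompact_Icc).exists_bound_of_continuousOn hk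
  set K : ℝ := max K₀ 0 with hKdef
  have hKnn : 0 ≤ K := le_max_right _ _
  have hK : ∀ s q, ‖k s q‖ ≤ K := by
    intro s q
    by_cases h : (s, q) ∈ Icc (0:ℝ) 2 ×ˢ Icc (0:ℝ) 1
    · exact le_trans (hK₀ (s, q) h) (le_max_left _ _)
    · rw [hk0 s q h]; simpa using hKnn
  -- the perturbation sequence
  set a : ℕ → ℝ := fun n => 1 / ((n:ℝ) + 1) with ha
  have ha_pos : ∀ n, 0 < a n := fun n => by positivity
  have ha_le1 : ∀ n, a n ≤ 1 := by
    intro n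
    rw [ha]
    rw [div_le_one (by positivity)]
    simp
  have ha_anti : Antitone a := by
    intro m n hmn
    simp only [ha]
    gcongr
  have ha_to : Tendsto a atTop (nhds 0) := tendsto_one_div_add_atTop_nhds_zero_nat
  set c : ℕ → ℝ := fun n => r * Real.sqrt ((n:ℝ) + 1) with hc
  have hc_nn : ∀ n, 0 ≤ c n := fun n => by positivity
  have hc_sq : ∀ n, (c n)^2 * a n = r^2 := by
    intro n
    simp only [hc, ha]
    rw [mul_pow, Real.sq_sqrt (by positivity)]
    field_simp
  set ψ : ℕ → ℝ → ℂ := fun n => (Ioc (0:ℝ) (a n)).indicator (fun _ => ((c n : ℝ) : ℂ)) with hψ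
  have hψ_zero : ∀ n q, q ∉ Ioc (0:ℝ) (a n) → ψ n q = 0 := fun n q h => indicator_of_notMem h _
  have hψ_eq : ∀ n q, ‖ψ n q‖^2 = (Ioc (0:ℝ) (a n)).indicator (fun _ => (c n)^2) q := by
    intro n q
    by_cases h : q ∈ Ioc (0:ℝ) (a n)
    · simp [hψ, indicator_of_mem h, Complex.norm_real, abs_of_nonneg (hc_nn n), sq_abs]
    · simp [hψ, indicator_of_notMem h]
  have hψ_L2 : ∀ n, MemLp (ψ n) 2 volume := fun n =>
    memLp_indicator_const 2 measurableSet_Ioc _ (Or.inr measure_Ioc_lt_top.ne)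
  have hψ_int_full : ∀ n, (∫ q, ‖ψ n q‖^2) = r^2 := by
    intro n
    simp_rw [hψ_eq n]
    rw [integral_indicator_const _ measurableSet_Ioc]
    rw [Real.volume_real_Ioc_of_le (ha_pos n).le, sub_zero, smul_eq_mul]
    rw [mul_comm]
    exact hc_sq n
  have hψ_int_Ioc1 : ∀ n, (∫ q in Ioc (0:ℝ) 1, ‖ψ n q‖^2) = r^2 := by
    intro n
    rw [← hψ_int_full n]
    apply setIntegral_eq_integral_of_forall_compl_eq_zero
    intro q hq
    rw [hψ_zero n q (fun hmem => hq (Ioc_subset_Ioc_right (ha_le1 n) hmem))]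
    simp
  -- x₀ is globally L²
  have hx₀L2 : MemLp x₀ 2 volume := by
    have hind : x₀ = (Icc (0:ℝ) 1).indicator x₀ := by
      funext t
      by_cases h : t ∈ Icc (0:ℝ) 1
      · rw [indicator_of_mem h]
      · rw [indicator_of_notMem h]; exact hx₀0 t h
    have hres : volume.restrict (Ioc (0:ℝ) 1) = volume.restrict (Icc (0:ℝ) 1) :=
      Measure.restrict_congr_set Ioc_ae_eq_Icc
    rw [hind]
    exact (memLp_indicator_iff_restrict measurableSet_Icc).mpr (hres ▸ hx₀)
  set xn : ℕ → ℝ → ℂ := fun n q => x₀ q + ψ n q with hxn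
  have hxnL2 : ∀ n, MemLp (xn n) 2 volume := fun n => hx₀L2.add (hψ_L2 n)
  have hxnm : ∀ n, AEStronglyMeasurable (xn n) volume := fun n => (hxnL2 n).1
  refine ⟨xn, ?_, ?_⟩
  · -- distance exactly r
    intro n
    have hd : ∀ q, xn n q - x₀ q = ψ n q := fun q => by simp [hxn]
    simp only [hd]
    rw [hψ_int_Ioc1 n]
    exact Real.sqrt_sq hr.le
  -- measurability of F x
  have hrectm : MeasurableSet (Icc (0:ℝ) 2 ×ˢ Icc (0:ℝ) 1) :=
    measurableSet_Icc.prod measurableSet_Icc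
  have hkm : AEStronglyMeasurable (fun p : ℝ × ℝ => k p.1 p.2) (volume.prod volume) := by
    have heq : (fun p : ℝ × ℝ => k p.1 p.2) =
        (Icc (0:ℝ) 2 ×ˢ Icc (0:ℝ) 1).indicator (Function.uncurry k) := by
      funext p
      by_cases h : p ∈ Icc (0:ℝ) 2 ×ˢ Icc (0:ℝ) 1
      · rw [indicator_of_mem h]; rfl
      · rw [indicator_of_notMem h]
        exact hk0 p.1 p.2 (by simpa using h)
    rw [heq]
    exact (aestronglyMeasurable_indicator_iff hrectm).mpr (hk.aestronglyMeasurable hrectm)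
  have hks : ∀ s, AEStronglyMeasurable (fun q => k s q) volume := by
    intro s
    by_cases hs : s ∈ Icc (0:ℝ) 2
    · have h1 : Continuous (fun q : ℝ => ((s, q) : ℝ × ℝ)) := continuous_const.prodMk continuous_id
      have hcont : ContinuousOn (fun q => k s q) (Icc (0:ℝ) 1) :=
        hk.comp h1.continuousOn (fun q hq => ⟨hs, hq⟩)
      have heq : (fun q => k s q) = (Icc (0:ℝ) 1).indicator (fun q => k s q) := by
        funext q
        by_cases h : q ∈ Icc (0:ℝ) 1
        · rw [indicator_of_mem h]
        · rw [indicator_of_notMem h]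
          exact hk0 s q (fun hin => h hin.2)
      rw [heq]
      exact (aestronglyMeasurable_indicator_iff measurableSet_Icc).mpr
        (hcont.aestronglyMeasurable measurableSet_Icc)
    · have heq : (fun q => k s q) = fun _ => (0:ℂ) :=
        funext fun q => hk0 s q (fun hin => hs hin.1)
      rw [heq]
      exact aestronglyMeasurable_const
  have hFm : ∀ x : ℝ → ℂ, AEStronglyMeasurable x volume → AEStronglyMeasurable (F x) volume := by
    intro x hx
    have h1 : AEStronglyMeasurable (fun p : ℝ × ℝ => x (p.1 - p.2)) (volume.prod volume) :=
      hx.comp_quasiMeasurePreserving (quasiMeasurePreserving_sub_of_right_invariant volume volume)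
    have h2 : AEStronglyMeasurable (fun p : ℝ × ℝ => x p.2) (volume.prod volume) :=
      hx.comp_quasiMeasurePreserving Measure.quasiMeasurePreserving_snd
    have hT : MeasurableSet {p : ℝ × ℝ | 0 < p.2 ∧ p.2 ≤ p.1} :=
      (measurableSet_lt measurable_const measurable_snd).inter
        (measurableSet_le measurable_snd measurable_fst)
    have hprod := (((hkm.mul h1).mul h2).indicator hT).integral_prod_right'
    have heq : F x = fun s => ∫ q,
        ({p : ℝ × ℝ | 0 < p.2 ∧ p.2 ≤ p.1}.indicator
          (fun p : ℝ × ℝ => k p.1 p.2 * x (p.1 - p.2) * x p.2)) (s, q) := by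
      funext s
      rw [hF x s, ← integral_indicator measurableSet_Ioc]
      congr 1
    rw [heq]
    exact hprod
  -- basic integrability facts
  have hInt2 : ∀ f : ℝ → ℂ, MemLp f 2 volume → Integrable (fun t => ‖f t‖^2) volume :=
    fun f hf => hf.norm.integrable_sq
  have hsubL2 : ∀ (f : ℝ → ℂ) (s : ℝ), MemLp f 2 volume →
      MemLp (fun q => f (s - q)) 2 volume :=
    fun f s hf => hf.comp_measurePreserving (Measure.measurePreserving_sub_left volume s)
  have htrans : ∀ (f : ℝ → ℂ) (s : ℝ), (∫ q, ‖f (s - q)‖^2) = ∫ t, ‖f t‖^2 :=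
    fun f s => integral_sub_left_eq_self (fun t => ‖f t‖^2) volume s
  have hsub_le : ∀ (f : ℝ → ℂ) (s : ℝ) (S : Set ℝ), MemLp f 2 volume →
      (∫ q in S, ‖f (s - q)‖^2) ≤ ∫ t, ‖f t‖^2 := by
    intro f s S hf
    rw [← htrans f s]
    exact setIntegral_le_integral (hInt2 _ (hsubL2 f s hf))
      (Eventually.of_forall fun q => by positivity)
  have hset_le : ∀ (g : ℝ → ℂ) (S : Set ℝ), MemLp g 2 volume →
      (∫ q in S, ‖g q‖^2) ≤ ∫ t, ‖g t‖^2 := by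
    intro g S hg
    exact setIntegral_le_integral (hInt2 _ hg) (Eventually.of_forall fun q => by positivity)
  -- the basic Cauchy-Schwarz estimate for the bilinear integrals
  have hG : ∀ (f g : ℝ → ℂ), MemLp f 2 volume → MemLp g 2 volume → ∀ (s : ℝ) (S : Set ℝ),
      ‖∫ q in S, k s q * f (s - q) * g q‖ ≤
        K * (Real.sqrt (∫ q in S, ‖f (s - q)‖^2) * Real.sqrt (∫ q in S, ‖g q‖^2)) := by
    intro f g hf hg s S
    have hfr : MemLp (fun q => f (s - q)) 2 (volume.restrict S) := (hsubL2 f s hf).restrict S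
    have hgr : MemLp g 2 (volume.restrict S) := hg.restrict S
    have hmul : Integrable (fun q => ‖f (s - q)‖ * ‖g q‖) (volume.restrict S) :=
      mul_int _ _ hfr.norm hgr.norm
    calc ‖∫ q in S, k s q * f (s - q) * g q‖
        ≤ ∫ q in S, ‖k s q * f (s - q) * g q‖ := norm_integral_le_integral_norm _
      _ ≤ ∫ q in S, K * (‖f (s - q)‖ * ‖g q‖) := by
          apply integral_mono_of_nonneg (Eventually.of_forall fun q => norm_nonneg _)
            (hmul.const_mul K)
          refine Eventually.of_forall fun q => ?_
          simp only
          rw [norm_mul, norm_mul, mul_assoc]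
          exact mul_le_mul_of_nonneg_right (hK s q) (by positivity)
      _ = K * ∫ q in S, ‖f (s - q)‖ * ‖g q‖ := integral_const_mul K _
      _ ≤ K * (Real.sqrt (∫ q in S, ‖f (s - q)‖^2) * Real.sqrt (∫ q in S, ‖g q‖^2)) :=
          mul_le_mul_of_nonneg_left (cs_aux (fun q => f (s - q)) g hfr hgr) hKnn
  have hFb : ∀ (x : ℝ → ℂ), MemLp x 2 volume → ∀ s,
      ‖F x s‖ ≤ K * (Real.sqrt (∫ t, ‖x t‖^2) * Real.sqrt (∫ t, ‖x t‖^2)) := by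
    intro x hx s
    rw [hF x s]
    refine (hG x x hx hx s (Ioc 0 s)).trans ?_
    have h1 : Real.sqrt (∫ q in Ioc (0:ℝ) s, ‖x (s - q)‖^2) ≤ Real.sqrt (∫ t, ‖x t‖^2) :=
      Real.sqrt_le_sqrt (hsub_le x s _ hx)
    have h2 : Real.sqrt (∫ q in Ioc (0:ℝ) s, ‖x q‖^2) ≤ Real.sqrt (∫ t, ‖x t‖^2) :=
      Real.sqrt_le_sqrt (hset_le x _ hx)
    exact mul_le_mul_of_nonneg_left
      (mul_le_mul h1 h2 (Real.sqrt_nonneg _) (Real.sqrt_nonneg _)) hKnn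
  have hIntOn : ∀ (f g : ℝ → ℂ), MemLp f 2 volume → MemLp g 2 volume → ∀ s : ℝ,
      IntegrableOn (fun q => k s q * f (s - q) * g q) (Ioc 0 s) volume := by
    intro f g hf hg s
    have hfr : MemLp (fun q => f (s - q)) 2 (volume.restrict (Ioc 0 s)) :=
      (hsubL2 f s hf).restrict _
    have hgr : MemLp g 2 (volume.restrict (Ioc 0 s)) := hg.restrict _
    have hmul : Integrable (fun q => f (s - q) * g q) (volume.restrict (Ioc 0 s)) :=
      mul_intC _ _ hfr hgr
    have h := hmul.bdd_mul ((hks s).restrict) (c := K) (Eventually.of_forall fun q => hK s q)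
    simpa [mul_assoc, IntegrableOn] using h
  -- splitting of the difference
  have hsplit : ∀ n s, F (xn n) s - F x₀ s =
      (∫ q in Ioc (0:ℝ) s, k s q * x₀ (s - q) * ψ n q) +
      (∫ q in Ioc (0:ℝ) s, k s q * ψ n (s - q) * x₀ q) +
      (∫ q in Ioc (0:ℝ) s, k s q * ψ n (s - q) * ψ n q) := by
    intro n s
    rw [hF, hF]
    have h0 := hIntOn x₀ x₀ hx₀L2 hx₀L2 s
    have h1 := hIntOn x₀ (ψ n) hx₀L2 (hψ_L2 n) s
    have h2 := hIntOn (ψ n) x₀ (hψ_L2 n) hx₀L2 s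
    have h3 := hIntOn (ψ n) (ψ n) (hψ_L2 n) (hψ_L2 n) s
    have hptw : ∀ q, k s q * xn n (s - q) * xn n q =
        k s q * x₀ (s - q) * x₀ q + (k s q * x₀ (s - q) * ψ n q +
          (k s q * ψ n (s - q) * x₀ q + k s q * ψ n (s - q) * ψ n q)) := by
      intro q
      simp only [hxn]
      ring
    simp only [hptw]
    have h23 : IntegrableOn (fun q => k s q * ψ n (s - q) * x₀ q +
        k s q * ψ n (s - q) * ψ n q) (Ioc 0 s) volume := h2.add h3
    have h123 : IntegrableOn (fun q => k s q * x₀ (s - q) * ψ n q +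
        (k s q * ψ n (s - q) * x₀ q + k s q * ψ n (s - q) * ψ n q)) (Ioc 0 s) volume :=
      h1.add h23
    rw [integral_add h0 h123, integral_add h1 h23, integral_add h2 h3]
    ring
  -- pointwise convergence of the difference
  have hpt : ∀ s : ℝ, 0 < s →
      Tendsto (fun n => F (xn n) s - F x₀ s) atTop (nhds 0) := by
    intro s hs
    have hEto : Tendsto (fun n => ∫ t in Ico (s - a n) s, ‖x₀ t‖^2) atTop (nhds 0) := by
      have hm : ∀ i : ℕ, MeasurableSet (Ico (s - a i) s) := fun i => measurableSet_Ico
      have hanti : Antitone fun i : ℕ => Ico (s - a i) s := by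
        intro i j hij
        exact Ico_subset_Ico_left (by linarith [ha_anti hij])
      have hint : ∃ i : ℕ, IntegrableOn (fun t => ‖x₀ t‖^2) (Ico (s - a i) s) volume :=
        ⟨0, (hInt2 x₀ hx₀L2).integrableOn⟩
      have h := tendsto_setIntegral_of_antitone hm hanti hint
      have hiter : (⋂ i : ℕ, Ico (s - a i) s) = ∅ := by
        rw [eq_empty_iff_forall_notMem]
        intro t ht
        have h1 := mem_iInter.mp ht
        have h2 : (0:ℝ) < s - t := by linarith [(h1 0).2]
        obtain ⟨n, hn⟩ := exists_nat_one_div_lt h2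
        have h3 := (h1 n).1
        have h4 : a n = 1 / ((n:ℝ) + 1) := by rw [ha]
        rw [h4] at h3
        linarith
      rw [hiter] at h
      simpa using h
    have hsq : Tendsto (fun n => Real.sqrt (∫ t in Ico (s - a n) s, ‖x₀ t‖^2))
        atTop (nhds 0) := by
      have h := (Real.continuous_sqrt.tendsto 0).comp hEto
      simpa [Function.comp_def, Real.sqrt_zero] using h
    have hbound : ∀ᶠ n in atTop, ‖F (xn n) s - F x₀ s‖ ≤
        K * (Real.sqrt (∫ t in Ico (s - a n) s, ‖x₀ t‖^2) * r) +
          K * (r * Real.sqrt (∫ t in Ico (s - a n) s, ‖x₀ t‖^2)) := by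
      have hev : ∀ᶠ n in atTop, a n < s / 2 := ha_to.eventually_lt_const (by linarith)
      filter_upwards [hev] with n han
      have han' : a n < s := lt_of_lt_of_le han (by linarith)
      rw [hsplit n s]
      have hch : (∫ q in Ioc (0:ℝ) (a n), ‖x₀ (s - q)‖^2) =
          ∫ t in Ico (s - a n) s, ‖x₀ t‖^2 := by
        have hpre : (fun t : ℝ => s - t) ⁻¹' (Ico (s - a n) s) = Ioc (0:ℝ) (a n) := by
          ext q
          simp only [mem_preimage, mem_Ico, mem_Ioc]
          constructor <;> intro hq <;>
            exact ⟨by linarith [hq.1, hq.2], by linarith [hq.1, hq.2]⟩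
        rw [← (Measure.measurePreserving_sub_left volume s).setIntegral_preimage_emb
          (MeasurableEquiv.subLeft s).measurableEmbedding (fun t => ‖x₀ t‖^2)
          (Ico (s - a n) s), hpre]
      have hc1 : ‖∫ q in Ioc (0:ℝ) s, k s q * x₀ (s - q) * ψ n q‖ ≤
          K * (Real.sqrt (∫ t in Ico (s - a n) s, ‖x₀ t‖^2) * r) := by
        have hz : ∀ q, q ∉ Ioc (0:ℝ) (a n) → k s q * x₀ (s - q) * ψ n q = 0 :=
          fun q hq => by rw [hψ_zero n q hq, mul_zero]
        have heq1 : (∫ q in Ioc (0:ℝ) s, k s q * x₀ (s - q) * ψ n q) =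
            ∫ q in Ioc (0:ℝ) (a n), k s q * x₀ (s - q) * ψ n q := by
          rw [setIntegral_eq_integral_of_forall_compl_eq_zero
              (fun q hq => hz q (fun hmem => hq (Ioc_subset_Ioc_right han'.le hmem))),
            setIntegral_eq_integral_of_forall_compl_eq_zero hz]
        rw [heq1]
        refine (hG x₀ (ψ n) hx₀L2 (hψ_L2 n) s (Ioc 0 (a n))).trans ?_
        have hψS : (∫ q in Ioc (0:ℝ) (a n), ‖ψ n q‖^2) = r^2 := by
          rw [← hψ_int_full n]
          exact setIntegral_eq_integral_of_forall_compl_eq_zero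
            (fun q hq => by rw [hψ_zero n q hq]; simp)
        rw [hch, hψS, Real.sqrt_sq hr.le]
      have hc2 : ‖∫ q in Ioc (0:ℝ) s, k s q * ψ n (s - q) * x₀ q‖ ≤
          K * (r * Real.sqrt (∫ t in Ico (s - a n) s, ‖x₀ t‖^2)) := by
        have hz2 : ∀ q, q ∉ Ico (s - a n) s → k s q * ψ n (s - q) * x₀ q = 0 := by
          intro q hq
          have hψ0 : ψ n (s - q) = 0 := by
            apply hψ_zero
            intro hmem
            exact hq ⟨by linarith [hmem.2], by linarith [hmem.1]⟩
          rw [hψ0, mul_zero, zero_mul]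
        have hz1 : ∀ q, q ∉ Ioc (0:ℝ) s → k s q * ψ n (s - q) * x₀ q = 0 := by
          intro q hq
          simp only [mem_Ioc, not_and_or, not_lt, not_le] at hq
          rcases hq with hq | hq
          · rcases eq_or_lt_of_le hq with hq0 | hq0
            · have hψ0 : ψ n (s - q) = 0 := by
                apply hψ_zero
                intro hmem
                have h5 := hmem.2
                linarith [han']
              rw [hψ0, mul_zero, zero_mul]
            · rw [hx₀0 q (fun hmem => absurd hmem.1 (not_le.mpr hq0)), mul_zero]
          · have hψ0 : ψ n (s - q) = 0 := by
              apply hψ_zero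
              intro hmem
              linarith [hmem.1]
            rw [hψ0, mul_zero, zero_mul]
        have heq2 : (∫ q in Ioc (0:ℝ) s, k s q * ψ n (s - q) * x₀ q) =
            ∫ q in Ico (s - a n) s, k s q * ψ n (s - q) * x₀ q := by
          rw [setIntegral_eq_integral_of_forall_compl_eq_zero hz1,
            setIntegral_eq_integral_of_forall_compl_eq_zero hz2]
        rw [heq2]
        refine (hG (ψ n) x₀ (hψ_L2 n) hx₀L2 s (Ico (s - a n) s)).trans ?_
        have h1 : Real.sqrt (∫ q in Ico (s - a n) s, ‖ψ n (s - q)‖^2) ≤ r := by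
          have hle : (∫ q in Ico (s - a n) s, ‖ψ n (s - q)‖^2) ≤ ∫ t, ‖ψ n t‖^2 :=
            hsub_le (ψ n) s _ (hψ_L2 n)
          calc Real.sqrt (∫ q in Ico (s - a n) s, ‖ψ n (s - q)‖^2)
              ≤ Real.sqrt (∫ t, ‖ψ n t‖^2) := Real.sqrt_le_sqrt hle
            _ = r := by rw [hψ_int_full n, Real.sqrt_sq hr.le]
        exact mul_le_mul_of_nonneg_left
          (mul_le_mul_of_nonneg_right h1 (Real.sqrt_nonneg _)) hKnn
      have hc3 : (∫ q in Ioc (0:ℝ) s, k s q * ψ n (s - q) * ψ n q) = 0 := by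
        have hzz : ∀ q : ℝ, k s q * ψ n (s - q) * ψ n q = 0 := by
          intro q
          by_cases h1' : q ∈ Ioc (0:ℝ) (a n)
          · have hψ0 : ψ n (s - q) = 0 := by
              apply hψ_zero
              intro hmem
              linarith [h1'.2, hmem.2]
            rw [hψ0, mul_zero, zero_mul]
          · rw [hψ_zero n q h1', mul_zero]
        simp only [hzz, integral_zero]
      rw [hc3, add_zero]
      calc ‖(∫ q in Ioc (0:ℝ) s, k s q * x₀ (s - q) * ψ n q) +
            (∫ q in Ioc (0:ℝ) s, k s q * ψ n (s - q) * x₀ q)‖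
          ≤ ‖∫ q in Ioc (0:ℝ) s, k s q * x₀ (s - q) * ψ n q‖ +
            ‖∫ q in Ioc (0:ℝ) s, k s q * ψ n (s - q) * x₀ q‖ := norm_add_le _ _
        _ ≤ K * (Real.sqrt (∫ t in Ico (s - a n) s, ‖x₀ t‖^2) * r) +
            K * (r * Real.sqrt (∫ t in Ico (s - a n) s, ‖x₀ t‖^2)) := add_le_add hc1 hc2
    have hgto : Tendsto (fun n =>
        K * (Real.sqrt (∫ t in Ico (s - a n) s, ‖x₀ t‖^2) * r) +
          K * (r * Real.sqrt (∫ t in Ico (s - a n) s, ‖x₀ t‖^2))) atTop (nhds 0) := by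
      have t1 := (hsq.mul_const r).const_mul K
      have t2 := (hsq.const_mul r).const_mul K
      simpa using t1.add t2
    exact squeeze_zero_norm' hbound hgto
  -- uniform bound
  have hWnn : (0:ℝ) ≤ Real.sqrt (2 * (∫ t, ‖x₀ t‖^2) + 2 * r^2) := Real.sqrt_nonneg _
  have hxnI2 : ∀ n, (∫ t, ‖xn n t‖^2) ≤ 2 * (∫ t, ‖x₀ t‖^2) + 2 * r^2 := by
    intro n
    have hpt2 : ∀ t, ‖xn n t‖^2 ≤ 2 * ‖x₀ t‖^2 + 2 * ‖ψ n t‖^2 := by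
      intro t
      have h1 : ‖xn n t‖ ≤ ‖x₀ t‖ + ‖ψ n t‖ := norm_add_le _ _
      nlinarith [h1, norm_nonneg (xn n t), norm_nonneg (x₀ t), norm_nonneg (ψ n t),
        sq_nonneg (‖x₀ t‖ - ‖ψ n t‖)]
    have hi1 : Integrable (fun t => 2 * ‖x₀ t‖^2 + 2 * ‖ψ n t‖^2) volume :=
      ((hInt2 x₀ hx₀L2).const_mul 2).add ((hInt2 _ (hψ_L2 n)).const_mul 2)
    calc (∫ t, ‖xn n t‖^2) ≤ ∫ t, (2 * ‖x₀ t‖^2 + 2 * ‖ψ n t‖^2) :=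
        integral_mono (hInt2 _ (hxnL2 n)) hi1 hpt2
      _ = 2 * (∫ t, ‖x₀ t‖^2) + 2 * r^2 := by
          rw [integral_add ((hInt2 x₀ hx₀L2).const_mul 2) ((hInt2 _ (hψ_L2 n)).const_mul 2),
            integral_const_mul, integral_const_mul, hψ_int_full n]
  have hWb : ∀ n, Real.sqrt (∫ t, ‖xn n t‖^2) ≤
      Real.sqrt (2 * (∫ t, ‖x₀ t‖^2) + 2 * r^2) :=
    fun n => Real.sqrt_le_sqrt (hxnI2 n)
  set W : ℝ := Real.sqrt (2 * (∫ t, ‖x₀ t‖^2) + 2 * r^2) with hW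
  set C₀ : ℝ := K * (W * W) +
      K * (Real.sqrt (∫ t, ‖x₀ t‖^2) * Real.sqrt (∫ t, ‖x₀ t‖^2)) with hC₀
  have hDb : ∀ n s, ‖F (xn n) s - F x₀ s‖ ≤ C₀ := by
    intro n s
    calc ‖F (xn n) s - F x₀ s‖ ≤ ‖F (xn n) s‖ + ‖F x₀ s‖ := norm_sub_le _ _
      _ ≤ C₀ := by
          rw [hC₀]
          refine add_le_add ((hFb _ (hxnL2 n) s).trans ?_) (hFb x₀ hx₀L2 s)
          exact mul_le_mul_of_nonneg_left
            (mul_le_mul (hWb n) (hWb n) (Real.sqrt_nonneg _) hWnn) hKnn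
  have hC₀nn : 0 ≤ C₀ := le_trans (norm_nonneg _) (hDb 0 0)
  -- dominated convergence
  have hDm : ∀ n, AEStronglyMeasurable (fun s => ‖F (xn n) s - F x₀ s‖^2)
      (volume.restrict (Ioc (0:ℝ) 2)) := by
    intro n
    have h := ((hFm (xn n) (hxnm n)).sub (hFm x₀ hx₀m)).norm
    exact ((h.mul h).congr (Eventually.of_forall fun s => (pow_two _).symm)).restrict
  have hbound_int : Integrable (fun _ : ℝ => C₀^2) (volume.restrict (Ioc (0:ℝ) 2)) :=
    integrableOn_const measure_Ioc_lt_top.ne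
  have h_bound : ∀ n, ∀ᵐ s ∂(volume.restrict (Ioc (0:ℝ) 2)),
      ‖‖F (xn n) s - F x₀ s‖^2‖ ≤ C₀^2 := by
    intro n
    refine Eventually.of_forall fun s => ?_
    rw [Real.norm_of_nonneg (by positivity)]
    exact pow_le_pow_left₀ (norm_nonneg _) (hDb n s) 2
  have h_lim : ∀ᵐ s ∂(volume.restrict (Ioc (0:ℝ) 2)),
      Tendsto (fun n => ‖F (xn n) s - F x₀ s‖^2) atTop (nhds 0) := by
    rw [ae_restrict_iff' measurableSet_Ioc]
    refine Eventually.of_forall fun s hs => ?_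
    simpa using ((hpt s hs.1).norm.pow 2)
  have hDCT := tendsto_integral_of_dominated_convergence
      (μ := volume.restrict (Ioc (0:ℝ) 2))
      (F := fun n s => ‖F (xn n) s - F x₀ s‖^2) (f := fun _ => (0:ℝ)) (bound := fun _ => C₀^2)
      hDm hbound_int h_bound h_lim
  rw [integral_zero] at hDCT
  have hfin := (Real.continuous_sqrt.tendsto 0).comp hDCT
  simpa [Function.comp_def, Real.sqrt_zero] using hfin
end

section
/- If for given y ∈ L²_ℂ(0,2) the function x ∈ L²_ℂ(0,1) solves the autoconvolution equation ∫₀ˢ x(s−q)x(q) dq = y(s) for almost all 0 ≤ s ≤ 2, then x and −x are the only solutions of this equation in L²_ℂ(0,1). -/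
open MeasureTheory Set

noncomputable def myF (f : ℝ → ℂ) (w : ℂ) : ℂ :=
  ∫ t : ℝ, f t * Complex.exp (-(2 * Real.pi * Complex.I * t) * w)

lemma int_mul_cont {f : ℝ → ℂ} (hf : Integrable f) (h0 : ∀ t ∉ Icc (0:ℝ) 1, f t = 0)
    {φ : ℝ → ℂ} (hφ : Continuous φ) : Integrable (fun t => f t * φ t) := by
  obtain ⟨C, hC⟩ := isCompact_Icc.exists_bound_of_continuousOn hφ.continuousOn
  refine Integrable.mono' (hf.norm.mul_const (max C 0))
    (hf.aestronglyMeasurable.mul hφ.aestronglyMeasurable) (ae_of_all _ fun t => ?_)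
  by_cases ht : t ∈ Icc (0:ℝ) 1
  · rw [norm_mul]
    exact mul_le_mul_of_nonneg_left ((hC t ht).trans (le_max_left _ _)) (norm_nonneg _)
  · simp [h0 t ht]

lemma myexp_norm {t : ℝ} (ht : t ∈ Icc (0:ℝ) 1) (v : ℂ) :
    ‖Complex.exp (-(2 * Real.pi * Complex.I * t) * v)‖ ≤ Real.exp (2 * Real.pi * ‖v‖) := by
  rw [Complex.norm_exp]
  apply Real.exp_le_exp.2
  have hre : (-(2 * Real.pi * Complex.I * t) * v).re = 2 * Real.pi * t * v.im := by
    simp [Complex.mul_re, Complex.mul_im]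
  rw [hre]
  have h2 : v.im ≤ ‖v‖ := (le_abs_self _).trans (Complex.abs_im_le_norm v)
  have hπ := Real.pi_pos
  have ht0 : 0 ≤ t := ht.1
  have A : 2*Real.pi*t*v.im ≤ 2*Real.pi*t*‖v‖ :=
    mul_le_mul_of_nonneg_left h2 (by positivity)
  have B : 2*Real.pi*t*‖v‖ ≤ 2*Real.pi*‖v‖ := by
    nlinarith [mul_nonneg (mul_nonneg hπ.le (sub_nonneg.2 ht.2)) (norm_nonneg v)]
  linarith

lemma myexp_cont (v : ℂ) :
    Continuous (fun t : ℝ => Complex.exp (-(2 * Real.pi * Complex.I * t) * v)) :=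
  Complex.continuous_exp.comp (by fun_prop)

lemma coeff_cont : Continuous (fun t : ℝ => -(2 * Real.pi * Complex.I * t) : ℝ → ℂ) := by
  fun_prop

lemma hasDerivAt_myF {f : ℝ → ℂ} (hf : Integrable f) (h0 : ∀ t ∉ Icc (0:ℝ) 1, f t = 0) (w : ℂ) :
    HasDerivAt (myF f) (myF (fun t => -(2 * Real.pi * Complex.I * t) * f t) w) w := by
  set F : ℂ → ℝ → ℂ := fun v t => f t * Complex.exp (-(2 * Real.pi * Complex.I * t) * v) with hF
  set F' : ℂ → ℝ → ℂ := fun v t =>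
    f t * (-(2 * Real.pi * Complex.I * t) * Complex.exp (-(2 * Real.pi * Complex.I * t) * v)) with hF'
  have hmeas : ∀ v : ℂ, AEStronglyMeasurable (F v) volume := fun v =>
    hf.aestronglyMeasurable.mul (myexp_cont v).aestronglyMeasurable
  have hint : ∀ v : ℂ, Integrable (F v) volume := fun v => int_mul_cont hf h0 (myexp_cont v)
  have key := hasDerivAt_integral_of_dominated_loc_of_deriv_le (F := F) (F' := F')
    (x₀ := w) (bound := fun t => ‖f t‖ * (2 * Real.pi * Real.exp (2 * Real.pi * (‖w‖ + 1))))
    (μ := volume) (Metric.ball_mem_nhds w one_pos)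
    (Filter.Eventually.of_forall hmeas) (hint w)
    (hf.aestronglyMeasurable.mul ((coeff_cont.mul (myexp_cont w)).aestronglyMeasurable))
    ?_ (hf.norm.mul_const _) ?_
  · have heq : (∫ t : ℝ, F' w t) = myF (fun t => -(2 * Real.pi * Complex.I * t) * f t) w := by
      unfold myF
      congr 1; ext t; rw [hF']; ring
    rw [← heq]
    exact key.2
  · refine ae_of_all _ fun t v hv => ?_
    by_cases ht : t ∈ Icc (0:ℝ) 1
    · show ‖f t * (-(2 * Real.pi * Complex.I * t) * Complex.exp (-(2 * Real.pi * Complex.I * t) * v))‖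
        ≤ ‖f t‖ * (2 * Real.pi * Real.exp (2 * Real.pi * (‖w‖ + 1)))
      have hnv : ‖v‖ ≤ ‖w‖ + 1 := by
        have hvw := mem_ball_iff_norm.1 hv
        calc ‖v‖ ≤ ‖w‖ + ‖v - w‖ := by
              simpa [add_comm] using norm_add_le (v - w) w
          _ ≤ ‖w‖ + 1 := by linarith
      have h1 : ‖(-(2 * Real.pi * Complex.I * t) : ℂ)‖ ≤ 2 * Real.pi := by
        simp only [norm_neg]
        rw [show ((2 : ℂ) * Real.pi * Complex.I * t) = ((2 * Real.pi * t : ℝ) : ℂ) * Complex.I by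
          push_cast; ring]
        rw [norm_mul, Complex.norm_I, mul_one, Complex.norm_real, Real.norm_eq_abs]
        rw [_root_.abs_of_nonneg (mul_nonneg (by positivity) ht.1)]
        nlinarith [Real.pi_pos, ht.1, ht.2]
      have h2 : ‖Complex.exp (-(2 * Real.pi * Complex.I * t) * v)‖
          ≤ Real.exp (2 * Real.pi * (‖w‖ + 1)) := by
        refine (myexp_norm ht v).trans ?_
        apply Real.exp_le_exp.2
        nlinarith [mul_nonneg Real.pi_pos.le (sub_nonneg.2 hnv)]
      rw [norm_mul, norm_mul]
      apply mul_le_mul_of_nonneg_left _ (norm_nonneg _)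
      exact mul_le_mul h1 h2 (norm_nonneg _) (by positivity)
    · show ‖f t * (-(2 * Real.pi * Complex.I * t) * Complex.exp (-(2 * Real.pi * Complex.I * t) * v))‖
        ≤ ‖f t‖ * (2 * Real.pi * Real.exp (2 * Real.pi * (‖w‖ + 1)))
      rw [h0 t ht]
      simp only [zero_mul, norm_zero]
      positivity
  · refine ae_of_all _ fun t v _ => ?_
    have hd : HasDerivAt (fun v : ℂ => f t * Complex.exp (-(2 * Real.pi * Complex.I * t) * v))
        (f t * (Complex.exp (-(2 * Real.pi * Complex.I * t) * v)
          * (-(2 * Real.pi * Complex.I * t) * 1))) v :=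
      (((hasDerivAt_id v).const_mul (-(2 * Real.pi * Complex.I * t) : ℂ)).cexp).const_mul (f t)
    have heq2 : F' v t = f t * (Complex.exp (-(2 * Real.pi * Complex.I * t) * v)
        * (-(2 * Real.pi * Complex.I * t) * 1)) := by rw [hF']; ring
    rw [heq2]
    exact hd

lemma myF_entire {f : ℝ → ℂ} (hf : Integrable f) (h0 : ∀ t ∉ Icc (0:ℝ) 1, f t = 0) :
    Differentiable ℂ (myF f) := fun w => (hasDerivAt_myF hf h0 w).differentiableAt

lemma factor_zero {f g : ℝ → ℂ} (hf : Integrable f) (hf0 : ∀ t ∉ Icc (0:ℝ) 1, f t = 0)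
    (hg : Integrable g) (hg0 : ∀ t ∉ Icc (0:ℝ) 1, g t = 0)
    (hprod : ∀ w : ℂ, myF f w * myF g w = 0) :
    (∀ w, myF f w = 0) ∨ (∀ w, myF g w = 0) := by
  have hFd := myF_entire hf hf0
  have hGd := myF_entire hg hg0
  have hFa : AnalyticOnNhd ℂ (myF f) univ :=
    hFd.differentiableOn.analyticOnNhd isOpen_univ
  have hGa : AnalyticOnNhd ℂ (myF g) univ :=
    hGd.differentiableOn.analyticOnNhd isOpen_univ
  set A : Bool → Set ℂ := fun b => if b then (myF f) ⁻¹' {0} else (myF g) ⁻¹' {0} with hA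
  have hclosed : ∀ b, IsClosed (A b) := by
    intro b
    rcases b with _ | _ <;>
      simp only [hA, if_true, if_false] <;>
      exact isClosed_singleton.preimage (by first | exact hGd.continuous | exact hFd.continuous)
  have hcover : ⋃ b, A b = univ := by
    ext w
    simp only [mem_iUnion, mem_univ, iff_true]
    rcases mul_eq_zero.1 (hprod w) with h | h
    · exact ⟨true, by simp [hA, h]⟩
    · exact ⟨false, by simp [hA, h]⟩
  obtain ⟨b, w₀, hw₀⟩ := nonempty_interior_of_iUnion_of_closed hclosed hcover
  have hev : ∀ (F : ℂ → ℂ), w₀ ∈ interior (F ⁻¹' {0}) → F =ᶠ[nhds w₀] 0 := by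
    intro F hmem
    exact Filter.eventually_of_mem (mem_interior_iff_mem_nhds.1 hmem) fun x hx => hx
  rcases b with _ | _
  · simp only [hA, if_false] at hw₀
    right
    intro w
    exact hGa.eqOn_zero_of_preconnected_of_eventuallyEq_zero isPreconnected_univ
      (mem_univ w₀) (hev _ hw₀) (mem_univ w)
  · simp only [hA, if_true] at hw₀
    left
    intro w
    exact hFa.eqOn_zero_of_preconnected_of_eventuallyEq_zero isPreconnected_univ
      (mem_univ w₀) (hev _ hw₀) (mem_univ w)

lemma moments_zero {f : ℝ → ℂ} (hf : Integrable f) (h0 : ∀ t ∉ Icc (0:ℝ) 1, f t = 0)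
    (hz : ∀ w, myF f w = 0) :
    ∀ n : ℕ, ∫ t : ℝ, (t : ℂ) ^ n * f t = 0 := by
  have key : ∀ n : ℕ, ∀ w, myF (fun t => (-(2 * Real.pi * Complex.I * t))^n * f t) w = 0 := by
    intro n
    induction n with
    | zero => simpa using hz
    | succ n ih =>
      intro w
      have hgn_int : Integrable (fun t : ℝ => (-(2 * Real.pi * Complex.I * t))^n * f t) := by
        have := int_mul_cont hf h0 (φ := fun t : ℝ => (-(2 * Real.pi * Complex.I * t))^n)
          (by fun_prop)
        simpa [mul_comm] using this
      have hgn0 : ∀ t ∉ Icc (0:ℝ) 1, (-(2 * Real.pi * Complex.I * t))^n * f t = 0 :=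
        fun t ht => by rw [h0 t ht, mul_zero]
      have hd := hasDerivAt_myF hgn_int hgn0 w
      have hfun : myF (fun t : ℝ => (-(2 * Real.pi * Complex.I * t))^n * f t) = fun _ => (0:ℂ) :=
        funext ih
      rw [hfun] at hd
      have hzero := (hasDerivAt_const w (0:ℂ)).unique hd
      have : myF (fun t : ℝ => -(2 * Real.pi * Complex.I * t) *
          ((-(2 * Real.pi * Complex.I * t))^n * f t)) w
          = myF (fun t : ℝ => (-(2 * Real.pi * Complex.I * t))^(n+1) * f t) w := by
        unfold myF; congr 1; ext t; ring
      rw [← this, ← hzero]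
  intro n
  have h1 := key n 0
  have h2 : myF (fun t : ℝ => (-(2 * Real.pi * Complex.I * t))^n * f t) 0
      = ∫ t : ℝ, (-(2 * Real.pi * Complex.I * t))^n * f t := by
    unfold myF
    congr 1; ext t; simp
  rw [h2] at h1
  have h3 : (∫ t : ℝ, (-(2 * Real.pi * Complex.I * t))^n * f t)
      = (-(2 * Real.pi * Complex.I))^n * ∫ t : ℝ, (t:ℂ)^n * f t := by
    rw [← integral_const_mul]
    congr 1; ext t; ring
  rw [h3] at h1
  have hne : ((-(2 * Real.pi * Complex.I))^n : ℂ) ≠ 0 := by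
    apply pow_ne_zero
    rw [neg_ne_zero]
    apply mul_ne_zero (mul_ne_zero two_ne_zero ?_) Complex.I_ne_zero
    exact_mod_cast Complex.ofReal_ne_zero.2 Real.pi_ne_zero
  exact (mul_eq_zero.1 h1).resolve_left hne

lemma ae_zero_of_moments {f : ℝ → ℂ} (hf : Integrable f) (h0 : ∀ t ∉ Icc (0:ℝ) 1, f t = 0)
    (hmom : ∀ n : ℕ, ∫ t : ℝ, (t:ℂ)^n * f t = 0) : ∀ᵐ t ∂(volume : Measure ℝ), f t = 0 := by
  apply ae_eq_zero_of_integral_contDiff_smul_eq_zero hf.locallyIntegrable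
  intro g hg hgsupp
  have hpoly : ∀ p : Polynomial ℝ, ∫ t : ℝ, ((p.eval t : ℝ) : ℂ) * f t = 0 := by
    intro p
    induction p using Polynomial.induction_on' with
    | add p q hp hq =>
      have hip : Integrable (fun t : ℝ => ((p.eval t : ℝ) : ℂ) * f t) := by
        have := int_mul_cont hf h0 (φ := fun t : ℝ => ((p.eval t : ℝ) : ℂ))
          (Complex.continuous_ofReal.comp p.continuous)
        simpa [mul_comm] using this
      have hiq : Integrable (fun t : ℝ => ((q.eval t : ℝ) : ℂ) * f t) := by
        have := int_mul_cont hf h0 (φ := fun t : ℝ => ((q.eval t : ℝ) : ℂ))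
          (Complex.continuous_ofReal.comp q.continuous)
        simpa [mul_comm] using this
      have : (fun t : ℝ => (((p+q).eval t : ℝ) : ℂ) * f t)
          = fun t : ℝ => ((p.eval t : ℝ) : ℂ) * f t + ((q.eval t : ℝ) : ℂ) * f t := by
        ext t; push_cast [Polynomial.eval_add]; ring
      rw [this, integral_add hip hiq, hp, hq, add_zero]
    | monomial n a =>
      have : (fun t : ℝ => (((Polynomial.monomial n a).eval t : ℝ) : ℂ) * f t)
          = fun t : ℝ => (a : ℂ) * ((t:ℂ)^n * f t) := by
        ext t; rw [Polynomial.eval_monomial]; push_cast; ring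
      rw [this, integral_const_mul, hmom n, mul_zero]
  -- now the approximation argument
  have hsmul : (fun x : ℝ => g x • f x) = fun x : ℝ => (g x : ℂ) * f x := by
    ext x; rw [Complex.real_smul]
  rw [hsmul]
  set C : ℝ := ∫ t in Icc (0:ℝ) 1, ‖f t‖ with hC
  have hCnn : 0 ≤ C := setIntegral_nonneg measurableSet_Icc fun t _ => norm_nonneg _
  have main : ∀ ε : ℝ, 0 < ε → ‖∫ x : ℝ, (g x : ℂ) * f x‖ ≤ ε * C := by
    intro ε hε
    obtain ⟨p, hp⟩ := exists_polynomial_near_of_continuousOn 0 1 g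
      hg.continuous.continuousOn ε hε
    have hdiff_int : Integrable (fun t : ℝ => ((g t - p.eval t : ℝ) : ℂ) * f t) := by
      have := int_mul_cont hf h0 (φ := fun t : ℝ => ((g t - p.eval t : ℝ) : ℂ))
        (Complex.continuous_ofReal.comp (hg.continuous.sub p.continuous))
      simpa [mul_comm] using this
    have heq : ∫ x : ℝ, (g x : ℂ) * f x = ∫ x : ℝ, ((g x - p.eval x : ℝ) : ℂ) * f x := by
      have hsplit : (fun x : ℝ => ((g x - p.eval x : ℝ) : ℂ) * f x)
          = fun x : ℝ => (g x : ℂ) * f x - ((p.eval x : ℝ) : ℂ) * f x := by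
        ext x; push_cast; ring
      have hgint : Integrable (fun t : ℝ => (g t : ℂ) * f t) := by
        have := int_mul_cont hf h0 (φ := fun t : ℝ => (g t : ℂ))
          (Complex.continuous_ofReal.comp hg.continuous)
        simpa [mul_comm] using this
      have hpint : Integrable (fun t : ℝ => ((p.eval t : ℝ) : ℂ) * f t) := by
        have := int_mul_cont hf h0 (φ := fun t : ℝ => ((p.eval t : ℝ) : ℂ))
          (Complex.continuous_ofReal.comp p.continuous)
        simpa [mul_comm] using this
      rw [hsplit, integral_sub hgint hpint, hpoly p, sub_zero]
    rw [heq]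
    have hout : ∀ x : ℝ, x ∉ Icc (0:ℝ) 1 → ((g x - p.eval x : ℝ) : ℂ) * f x = 0 := by
      intro x hx; rw [h0 x hx, mul_zero]
    rw [← setIntegral_eq_integral_of_forall_compl_eq_zero hout]
    calc ‖∫ x in Icc (0:ℝ) 1, ((g x - p.eval x : ℝ) : ℂ) * f x‖
        ≤ ∫ x in Icc (0:ℝ) 1, ‖((g x - p.eval x : ℝ) : ℂ) * f x‖ :=
          norm_integral_le_integral_norm _
      _ ≤ ∫ x in Icc (0:ℝ) 1, ε * ‖f x‖ := by
          apply setIntegral_mono_on hdiff_int.norm.integrableOn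
            (hf.norm.integrableOn.const_mul ε) measurableSet_Icc
          intro x hx
          rw [norm_mul, Complex.norm_real, Real.norm_eq_abs, abs_sub_comm]
          exact mul_le_mul_of_nonneg_right (hp x hx).le (norm_nonneg _)
      _ = ε * C := by rw [integral_const_mul]
  have : ‖∫ x : ℝ, (g x : ℂ) * f x‖ ≤ 0 := by
    apply le_of_forall_pos_le_add
    intro ε hε
    have h1 := main (ε / (C + 1)) (by positivity)
    have h2 : ε / (C + 1) * C ≤ ε := by
      rw [div_mul_eq_mul_div, div_le_iff₀ (by linarith)]
      nlinarith
    linarith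
  simpa using norm_le_zero_iff.1 this

lemma myF_mul {f g : ℝ → ℂ} (hf : Integrable f) (hf0 : ∀ t ∉ Icc (0:ℝ) 1, f t = 0)
    (hg : Integrable g) (hg0 : ∀ t ∉ Icc (0:ℝ) 1, g t = 0)
    (hconv : ∀ᵐ s : ℝ ∂volume, (∫ q : ℝ, f (s - q) * g q) = 0) (w : ℂ) :
    myF f w * myF g w = 0 := by
  set e : ℝ → ℂ := fun t => Complex.exp (-(2 * Real.pi * Complex.I * t) * w) with he
  have he_add : ∀ u q : ℝ, e (u + q) = e u * e q := by
    intro u q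
    rw [he]; simp only
    rw [← Complex.exp_add]; congr 1; push_cast; ring
  set Φ : ℝ → ℂ := fun t => f t * e t with hΦ
  set Ψ : ℝ → ℂ := fun t => g t * e t with hΨ
  have hΦi : Integrable Φ := int_mul_cont hf hf0 (myexp_cont w)
  have hΨi : Integrable Ψ := int_mul_cont hg hg0 (myexp_cont w)
  have hT : MeasurePreserving (fun p : ℝ × ℝ => (p.1 - p.2, p.2))
      ((volume : Measure ℝ).prod volume) ((volume : Measure ℝ).prod volume) :=
    measurePreserving_sub_prod volume volume
  have h1 : Integrable (fun p : ℝ × ℝ => Φ p.1 * Ψ p.2) ((volume : Measure ℝ).prod volume) :=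
    hΦi.mul_prod hΨi
  have hprod : Integrable (fun p : ℝ × ℝ => Φ (p.1 - p.2) * Ψ p.2)
      ((volume : Measure ℝ).prod volume) :=
    (hT.integrable_comp h1.aestronglyMeasurable).2 h1
  have hswap : Integrable (Function.uncurry fun q s : ℝ => Φ (s - q) * Ψ q)
      ((volume : Measure ℝ).prod volume) := by
    have := hprod.swap
    exact this
  have key : myF f w * myF g w = ∫ s : ℝ, (∫ q : ℝ, f (s - q) * g q) * e s := by
    calc myF f w * myF g w = (∫ s : ℝ, Φ s) * (∫ q : ℝ, Ψ q) := rfl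
      _ = ∫ q : ℝ, (∫ s : ℝ, Φ s) * Ψ q := (integral_const_mul _ _).symm
      _ = ∫ q : ℝ, (∫ s : ℝ, Φ (s - q)) * Ψ q := by
          congr 1; ext q; rw [integral_sub_right_eq_self Φ q]
      _ = ∫ q : ℝ, ∫ s : ℝ, Φ (s - q) * Ψ q := by
          congr 1; ext q; rw [integral_mul_const]
      _ = ∫ s : ℝ, ∫ q : ℝ, Φ (s - q) * Ψ q := integral_integral_swap hswap
      _ = ∫ s : ℝ, (∫ q : ℝ, f (s - q) * g q) * e s := by
          congr 1; ext s
          rw [← integral_mul_const]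
          congr 1; ext q
          have hes : e s = e (s - q) * e q := by
            rw [← he_add]; congr 1; ring
          rw [hΦ, hΨ]; simp only
          rw [hes]; ring
  rw [key]
  have : ∀ᵐ s : ℝ ∂volume, (∫ q : ℝ, f (s - q) * g q) * e s = 0 := by
    filter_upwards [hconv] with s hs
    rw [hs, zero_mul]
  exact integral_eq_zero_of_ae this

lemma globalize {u : ℝ → ℂ} (hu : MemLp u 2 (volume.restrict (Ioc (0:ℝ) 1)))
    (hu0 : ∀ t ∉ Icc (0:ℝ) 1, u t = 0) :
    MemLp u 2 (volume : Measure ℝ) ∧ Integrable u (volume : Measure ℝ) := by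
  have hne : ∀ᵐ t : ℝ ∂volume, t ≠ (0:ℝ) := by
    rw [ae_iff]
    simpa using (measure_singleton (0:ℝ) : (volume : Measure ℝ) {0} = 0)
  have haeq : u =ᵐ[volume] (Ioc (0:ℝ) 1).indicator u := by
    filter_upwards [hne] with t ht
    by_cases hmem : t ∈ Ioc (0:ℝ) 1
    · rw [indicator_of_mem hmem]
    · rw [indicator_of_notMem hmem]
      apply hu0 t
      intro hc
      exact hmem ⟨lt_of_le_of_ne hc.1 (Ne.symm ht), hc.2⟩
  haveI : IsFiniteMeasure ((volume : Measure ℝ).restrict (Ioc (0:ℝ) 1)) :=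
    ⟨by rw [Measure.restrict_apply_univ]; exact measure_Ioc_lt_top⟩
  constructor
  · exact ((memLp_indicator_iff_restrict measurableSet_Ioc).2 hu).ae_eq haeq.symm
  · have hIoc : IntegrableOn u (Ioc (0:ℝ) 1) volume := hu.integrable one_le_two
    exact ((integrable_indicator_iff measurableSet_Ioc).2 hIoc).congr haeq.symm

lemma prodInt {u v : ℝ → ℂ} (hu : MemLp u 2 (volume : Measure ℝ))
    (hv : MemLp v 2 (volume : Measure ℝ)) (s : ℝ) :
    Integrable (fun q : ℝ => u (s - q) * v q) (volume : Measure ℝ) := by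
  have hT : MeasurePreserving (fun q : ℝ => s - q) volume volume :=
    Measure.measurePreserving_sub_left volume s
  have h1 : MemLp (fun q : ℝ => u (s - q)) 2 (volume : Measure ℝ) :=
    hu.comp_measurePreserving hT
  have h2 : MemLp ((fun q : ℝ => u (s - q)) • v) 1 (volume : Measure ℝ) :=
    hv.smul h1 (hpqr := ⟨by rw [inv_one]; exact ENNReal.inv_two_add_inv_two⟩)
  have := memLp_one_iff_integrable.1 h2
  exact this

/-- If `x ∈ L²_ℂ(0,1)` solves the autoconvolution equation `x*x = y` a.e. on `[0,2]`,
then `x` and `-x` are the only solutions of this equation in `L²_ℂ(0,1)`. -/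
theorem stmt8 (x y : ℝ → ℂ)
    (hxm : AEStronglyMeasurable x volume)
    (hx : MemLp x 2 (volume.restrict (Ioc (0:ℝ) 1)))
    (hx0 : ∀ t : ℝ, t ∉ Icc (0:ℝ) 1 → x t = 0)
    (hxsol : ∀ᵐ s ∂(volume.restrict (Ioc (0:ℝ) 2)),
      ∫ q in Ioc (0:ℝ) s, x (s - q) * x q = y s) :
    ∀ z : ℝ → ℂ, AEStronglyMeasurable z volume →
      MemLp z 2 (volume.restrict (Ioc (0:ℝ) 1)) →
      (∀ t : ℝ, t ∉ Icc (0:ℝ) 1 → z t = 0) →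
      (∀ᵐ s ∂(volume.restrict (Ioc (0:ℝ) 2)),
        ∫ q in Ioc (0:ℝ) s, z (s - q) * z q = y s) →
      (∀ᵐ q ∂(volume.restrict (Ioc (0:ℝ) 1)), z q = x q) ∨
      (∀ᵐ q ∂(volume.restrict (Ioc (0:ℝ) 1)), z q = -x q) := by
  intro z hzm hz hz0 hzsol
  obtain ⟨hx2, hxi⟩ := globalize hx (fun t ht => hx0 t ht)
  obtain ⟨hz2, hzi⟩ := globalize hz (fun t ht => hz0 t ht)
  set f : ℝ → ℂ := fun t => x t - z t with hfdef
  set g : ℝ → ℂ := fun t => x t + z t with hgdef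
  have hf0 : ∀ t ∉ Icc (0:ℝ) 1, f t = 0 := by
    intro t ht; rw [hfdef]; simp only; rw [hx0 t ht, hz0 t ht, sub_zero]
  have hg0 : ∀ t ∉ Icc (0:ℝ) 1, g t = 0 := by
    intro t ht; rw [hgdef]; simp only; rw [hx0 t ht, hz0 t ht, add_zero]
  have hfi : Integrable f volume := hxi.sub hzi
  have hgi : Integrable g volume := hxi.add hzi
  have hne : ∀ᵐ q : ℝ ∂volume, q ≠ (0:ℝ) := by
    rw [ae_iff]
    simpa using (measure_singleton (0:ℝ) : (volume : Measure ℝ) {0} = 0)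
  -- the convolution of f and g vanishes a.e.
  have hxsol' := (ae_restrict_iff' measurableSet_Ioc).1 hxsol
  have hzsol' := (ae_restrict_iff' measurableSet_Ioc).1 hzsol
  have hconv : ∀ᵐ s : ℝ ∂volume, (∫ q : ℝ, f (s - q) * g q) = 0 := by
    filter_upwards [hxsol', hzsol'] with s hxs hzs
    by_cases hs : s ∈ Ioc (0:ℝ) 2
    · -- inside
      have hxa := hxs hs
      have hza := hzs hs
      have e1 : Integrable (fun q : ℝ => x (s - q) * x q) volume := prodInt hx2 hx2 s
      have e2 : Integrable (fun q : ℝ => x (s - q) * z q) volume := prodInt hx2 hz2 s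
      have e3 : Integrable (fun q : ℝ => z (s - q) * x q) volume := prodInt hz2 hx2 s
      have e4 : Integrable (fun q : ℝ => z (s - q) * z q) volume := prodInt hz2 hz2 s
      have hexp : (fun q : ℝ => f (s - q) * g q)
          = ((fun q : ℝ => x (s - q) * x q) + (fun q : ℝ => x (s - q) * z q))
            - ((fun q : ℝ => z (s - q) * x q) + (fun q : ℝ => z (s - q) * z q)) := by
        ext q
        simp only [Pi.sub_apply, Pi.add_apply, hfdef, hgdef]
        ring
      rw [hexp, integral_sub' (e1.add e2) (e3.add e4), integral_add' e1 e2, integral_add' e3 e4]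
      have hcross : (∫ q : ℝ, x (s - q) * z q) = ∫ q : ℝ, z (s - q) * x q := by
        have h := integral_sub_left_eq_self (fun u : ℝ => x u * z (s - u)) volume s
        simp only [sub_sub_cancel] at h
        rw [h]
        congr 1; ext u; ring
      have hmain : ∀ (u : ℝ → ℂ), (∀ t ∉ Icc (0:ℝ) 1, u t = 0) →
          (∫ q : ℝ, u (s - q) * u q) = ∫ q in Ioc (0:ℝ) s, u (s - q) * u q := by
        intro u hu0
        rw [← integral_indicator measurableSet_Ioc]
        apply integral_congr_ae
        filter_upwards [hne] with q hq
        by_cases hqm : q ∈ Ioc (0:ℝ) s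
        · rw [indicator_of_mem hqm]
        · rw [indicator_of_notMem hqm]
          rcases le_or_gt q 0 with hq0 | hq0
          · rw [hu0 q (fun hc => hq (le_antisymm hq0 hc.1)), mul_zero]
          · have hqs : s < q := by
              by_contra hc; push_neg at hc; exact hqm ⟨hq0, hc⟩
            rw [hu0 (s - q) (fun hc => absurd hc.1 (by linarith)), zero_mul]
      rw [hmain x hx0, hmain z hz0, hxa, hza, hcross]
      ring
    · -- outside
      apply integral_eq_zero_of_ae
      filter_upwards [hne] with q hq
      simp only [Pi.zero_apply]
      have hs' : s ≤ 0 ∨ 2 < s := by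
        rcases le_or_gt s 0 with h | h
        · exact Or.inl h
        · right; by_contra h2; push_neg at h2; exact hs ⟨h, h2⟩
      rcases hs' with h | h
      · rcases lt_or_ge 0 q with hq0 | hq0
        · rw [hf0 (s - q) (fun hc => absurd hc.1 (by linarith)), zero_mul]
        · rw [hg0 q (fun hc => hq (le_antisymm hq0 hc.1)), mul_zero]
      · by_cases hqI : q ∈ Icc (0:ℝ) 1
        · rw [hf0 (s - q) (fun hc => absurd hc.2 (by linarith [hqI.2])), zero_mul]
        · rw [hg0 q hqI, mul_zero]
  have hprod : ∀ w : ℂ, myF f w * myF g w = 0 := myF_mul hfi hf0 hgi hg0 hconv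
  rcases factor_zero hfi hf0 hgi hg0 hprod with h | h
  · left
    have hf_ae : ∀ᵐ t : ℝ ∂volume, f t = 0 :=
      ae_zero_of_moments hfi hf0 (moments_zero hfi hf0 h)
    filter_upwards [ae_restrict_of_ae hf_ae] with q hq
    exact (sub_eq_zero.1 hq).symm
  · right
    have hg_ae : ∀ᵐ t : ℝ ∂volume, g t = 0 :=
      ae_zero_of_moments hgi hg0 (moments_zero hgi hg0 h)
    filter_upwards [ae_restrict_of_ae hg_ae] with q hq
    exact eq_neg_of_add_eq_zero_right hq
end

section
/- Let k : [0,2]×[0,1] → ℂ be continuous and let F : L²_ℂ(0,1) → L²_ℂ(0,2) be given by [F(x)](s) = ∫₀ˢ k(s,q)x(s−q)x(q)dq. Then F is Fréchet differentiable at every x₀ ∈ L²_ℂ(0,1) with derivative [F′(x₀)h](s) = ∫₀ˢ (k(s,q) + k(s,s−q)) x₀(s−q) h(q) dq, and F′(x₀) : L²_ℂ(0,1) → L²_ℂ(0,2) is a bounded linear operator. -/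
open MeasureTheory Set

open scoped ENNReal NNReal

namespace Stmt12Aux

/-- reflection substitution on `Ioc 0 s` -/
lemma integral_refl {E : Type*} [NormedAddCommGroup E] [NormedSpace ℝ E]
    (f : ℝ → E) (s : ℝ) :
    (∫ q in Ioc (0:ℝ) s, f (s - q)) = ∫ q in Ioc (0:ℝ) s, f q := by
  rw [← integral_indicator measurableSet_Ioc]
  have h2 : ∀ q : ℝ, (Ioc (0:ℝ) s).indicator (fun q => f (s - q)) q
      = (Ico (0:ℝ) s).indicator f (s - q) := by
    intro q
    by_cases hq : q ∈ Ioc (0:ℝ) s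
    · rw [indicator_of_mem hq, indicator_of_mem]
      exact ⟨by linarith [hq.2], by linarith [hq.1]⟩
    · rw [indicator_of_notMem hq, indicator_of_notMem]
      intro hmem
      exact hq ⟨by rcases hmem with ⟨h1, h2⟩; linarith, by rcases hmem with ⟨h1, h2⟩; linarith⟩
  simp_rw [h2]
  rw [integral_sub_left_eq_self ((Ico (0:ℝ) s).indicator f) volume s,
    integral_indicator measurableSet_Ico, Measure.restrict_congr_set Ico_ae_eq_Ioc]

lemma memLp_glob {u : ℝ → ℂ} (hm : AEStronglyMeasurable u volume)
    (hu : MemLp u 2 (volume.restrict (Ioc (0:ℝ) 1)))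
    (h0 : ∀ t : ℝ, t ∉ Icc (0:ℝ) 1 → u t = 0) : MemLp u 2 (volume : Measure ℝ) := by
  refine ⟨hm, ?_⟩
  have he : u = (Icc (0:ℝ) 1).indicator u := by
    funext t; by_cases h : t ∈ Icc (0:ℝ) 1
    · simp [indicator_of_mem h]
    · simp [indicator_of_notMem h, h0 t h]
  calc eLpNorm u 2 volume = eLpNorm ((Icc (0:ℝ) 1).indicator u) 2 volume := by rw [← he]
    _ = eLpNorm u 2 (volume.restrict (Icc (0:ℝ) 1)) :=
        eLpNorm_indicator_eq_eLpNorm_restrict measurableSet_Icc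
    _ = eLpNorm u 2 (volume.restrict (Ioc (0:ℝ) 1)) := by
        rw [Measure.restrict_congr_set Ioc_ae_eq_Icc]
    _ < ⊤ := hu.2

lemma mul_integrable {𝕜 : Type*} [RCLike 𝕜] {u v : ℝ → 𝕜}
    (hu : MemLp u 2 (volume : Measure ℝ)) (hv : MemLp v 2 (volume : Measure ℝ)) :
    Integrable (fun q => u q * v q) volume := by
  have h121 : (1 : ℝ≥0∞) / 1 = 1 / 2 + 1 / 2 := by
    rw [ENNReal.add_halves]; simp
  have h := MemLp.smul (r := 1) hv hu (hpqr := ⟨by simpa [one_div] using h121.symm⟩)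
  rw [← memLp_one_iff_integrable]
  exact h

lemma memLp_refl {u : ℝ → ℂ} (hu : MemLp u 2 (volume : Measure ℝ)) (s : ℝ) :
    MemLp (fun q => u (s - q)) 2 (volume : Measure ℝ) :=
  hu.comp_measurePreserving (Measure.measurePreserving_sub_left volume s)

lemma integrable_kernel {w u v : ℝ → ℂ} {M' : ℝ} (s : ℝ)
    (hwm : AEStronglyMeasurable w volume) (hw : ∀ q, ‖w q‖ ≤ M')
    (hu : MemLp u 2 (volume : Measure ℝ)) (hv : MemLp v 2 (volume : Measure ℝ)) :
    Integrable (fun q => w q * u (s - q) * v q) (volume.restrict (Ioc (0:ℝ) s)) := by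
  have hmul : Integrable (fun q => u (s - q) * v q) volume :=
    mul_integrable (memLp_refl hu s) hv
  have h := (hmul.restrict (s := Ioc (0:ℝ) s)).bdd_mul hwm.restrict (Filter.Eventually.of_forall hw)
  simpa [mul_assoc] using h

lemma int_norm_sq {u : ℝ → ℂ} (hu : MemLp u 2 (volume : Measure ℝ)) :
    Integrable (fun q => ‖u q‖ ^ 2) volume := by
  have := mul_integrable (𝕜 := ℝ) hu.norm hu.norm
  simpa [sq] using this

lemma norm_sq_integral_eq {u : ℝ → ℂ} (h0 : ∀ t : ℝ, t ∉ Icc (0:ℝ) 1 → u t = 0) :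
    (∫ q, ‖u q‖ ^ 2) = ∫ q in Ioc (0:ℝ) 1, ‖u q‖ ^ 2 := by
  have he : (fun q => ‖u q‖ ^ 2) = (Icc (0:ℝ) 1).indicator (fun q => ‖u q‖ ^ 2) := by
    funext t; by_cases h : t ∈ Icc (0:ℝ) 1
    · simp [indicator_of_mem h]
    · simp [indicator_of_notMem h, h0 t h]
  have h1 : (∫ q, ‖u q‖ ^ 2) = ∫ q in Icc (0:ℝ) 1, ‖u q‖ ^ 2 := by
    rw [← integral_indicator measurableSet_Icc, ← he]
  rw [h1, Measure.restrict_congr_set Ioc_ae_eq_Icc]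

lemma sq_integral_le {u : ℝ → ℂ} (hu : MemLp u 2 (volume : Measure ℝ))
    (h0 : ∀ t : ℝ, t ∉ Icc (0:ℝ) 1 → u t = 0) (S : Set ℝ) :
    (∫ q in S, ‖u q‖ ^ 2) ≤ ∫ q in Ioc (0:ℝ) 1, ‖u q‖ ^ 2 := by
  rw [← norm_sq_integral_eq h0]
  exact setIntegral_le_integral (int_norm_sq hu)
    (Filter.Eventually.of_forall fun q => sq_nonneg _)

/-- Cauchy–Schwarz bound for the kernel integral. -/
lemma cs_bound {w u v : ℝ → ℂ} {M' : ℝ} (hw : ∀ q, ‖w q‖ ≤ M')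
    (hu : MemLp u 2 (volume : Measure ℝ)) (hu0 : ∀ t : ℝ, t ∉ Icc (0:ℝ) 1 → u t = 0)
    (hv : MemLp v 2 (volume : Measure ℝ)) (hv0 : ∀ t : ℝ, t ∉ Icc (0:ℝ) 1 → v t = 0)
    (s : ℝ) :
    ‖∫ q in Ioc (0:ℝ) s, w q * u (s - q) * v q‖ ≤
      M' * (Real.sqrt (∫ q in Ioc (0:ℝ) 1, ‖u q‖ ^ 2) *
            Real.sqrt (∫ q in Ioc (0:ℝ) 1, ‖v q‖ ^ 2)) := by
  have hM' : 0 ≤ M' := le_trans (norm_nonneg (w 0)) (hw 0)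
  set A : ℝ := ∫ q in Ioc (0:ℝ) 1, ‖u q‖ ^ 2 with hA
  set B : ℝ := ∫ q in Ioc (0:ℝ) 1, ‖v q‖ ^ 2 with hB
  have hAnn : 0 ≤ A := integral_nonneg fun q => sq_nonneg _
  have hBnn : 0 ≤ B := integral_nonneg fun q => sq_nonneg _
  have hus : MemLp (fun q => u (s - q)) 2 (volume : Measure ℝ) := memLp_refl hu s
  have hmulint : Integrable (fun q => ‖u (s - q)‖ * ‖v q‖) (volume.restrict (Ioc (0:ℝ) s)) := by
    have := ((mul_integrable hus hv).restrict (s := Ioc (0:ℝ) s)).norm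
    simpa [norm_mul] using this
  have step1 : ‖∫ q in Ioc (0:ℝ) s, w q * u (s - q) * v q‖ ≤
      ∫ q in Ioc (0:ℝ) s, ‖w q * u (s - q) * v q‖ := norm_integral_le_integral_norm _
  have step2 : (∫ q in Ioc (0:ℝ) s, ‖w q * u (s - q) * v q‖) ≤
      M' * ∫ q in Ioc (0:ℝ) s, ‖u (s - q)‖ * ‖v q‖ := by
    rw [← integral_const_mul]
    refine integral_mono_of_nonneg (Filter.Eventually.of_forall fun q => norm_nonneg _)
      (hmulint.const_mul M') (Filter.Eventually.of_forall fun q => ?_)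
    dsimp only
    rw [norm_mul, norm_mul, mul_assoc]
    exact mul_le_mul_of_nonneg_right (hw q)
      (mul_nonneg (norm_nonneg _) (norm_nonneg _))
  -- Hölder
  have hconj : Real.HolderConjugate 2 2 := ⟨by norm_num, by norm_num, by norm_num⟩
  have h2 : ENNReal.ofReal (2:ℝ) = 2 := by simp
  have step3 : (∫ q in Ioc (0:ℝ) s, ‖u (s - q)‖ * ‖v q‖) ≤
      (∫ q in Ioc (0:ℝ) s, ‖u (s - q)‖ ^ (2:ℝ)) ^ ((1:ℝ)/2) *
      (∫ q in Ioc (0:ℝ) s, ‖v q‖ ^ (2:ℝ)) ^ ((1:ℝ)/2) := by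
    refine integral_mul_norm_le_Lp_mul_Lq hconj ?_ ?_
    · rw [h2]; exact hus.restrict _
    · rw [h2]; exact hv.restrict _
  have hrpow : ∀ g : ℝ → ℂ, ∀ q : ℝ, ‖g q‖ ^ (2:ℝ) = ‖g q‖ ^ 2 := by
    intro g q
    rw [show (2:ℝ) = ((2:ℕ):ℝ) by norm_num, Real.rpow_natCast]
  have hufac : (∫ q in Ioc (0:ℝ) s, ‖u (s - q)‖ ^ (2:ℝ)) ≤ A := by
    calc (∫ q in Ioc (0:ℝ) s, ‖u (s - q)‖ ^ (2:ℝ))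
        = ∫ q in Ioc (0:ℝ) s, ‖u (s - q)‖ ^ 2 := by simp_rw [hrpow u]
      _ = ∫ q in Ioc (0:ℝ) s, ‖u q‖ ^ 2 := integral_refl (fun q => ‖u q‖ ^ 2) s
      _ ≤ A := sq_integral_le hu hu0 _
  have hvfac : (∫ q in Ioc (0:ℝ) s, ‖v q‖ ^ (2:ℝ)) ≤ B := by
    calc (∫ q in Ioc (0:ℝ) s, ‖v q‖ ^ (2:ℝ))
        = ∫ q in Ioc (0:ℝ) s, ‖v q‖ ^ 2 := by simp_rw [hrpow v]
      _ ≤ B := sq_integral_le hv hv0 _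
  have hunn : (0:ℝ) ≤ ∫ q in Ioc (0:ℝ) s, ‖u (s - q)‖ ^ (2:ℝ) :=
    integral_nonneg fun q => Real.rpow_nonneg (norm_nonneg _) _
  have hvnn : (0:ℝ) ≤ ∫ q in Ioc (0:ℝ) s, ‖v q‖ ^ (2:ℝ) :=
    integral_nonneg fun q => Real.rpow_nonneg (norm_nonneg _) _
  have step4 : (∫ q in Ioc (0:ℝ) s, ‖u (s - q)‖ ^ (2:ℝ)) ^ ((1:ℝ)/2) *
      (∫ q in Ioc (0:ℝ) s, ‖v q‖ ^ (2:ℝ)) ^ ((1:ℝ)/2) ≤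
      Real.sqrt A * Real.sqrt B := by
    rw [Real.sqrt_eq_rpow, Real.sqrt_eq_rpow]
    exact mul_le_mul (Real.rpow_le_rpow hunn hufac (by norm_num))
      (Real.rpow_le_rpow hvnn hvfac (by norm_num))
      (Real.rpow_nonneg hvnn _) (Real.rpow_nonneg hAnn _)
  calc ‖∫ q in Ioc (0:ℝ) s, w q * u (s - q) * v q‖
      ≤ ∫ q in Ioc (0:ℝ) s, ‖w q * u (s - q) * v q‖ := step1
    _ ≤ M' * ∫ q in Ioc (0:ℝ) s, ‖u (s - q)‖ * ‖v q‖ := step2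
    _ ≤ M' * (Real.sqrt A * Real.sqrt B) :=
        mul_le_mul_of_nonneg_left (le_trans step3 step4) hM'

/-- L² bound over `Ioc 0 2` from a uniform pointwise bound. -/
lemma l2_bound {G : ℝ → ℂ} {B : ℝ} (hB : 0 ≤ B) (hbd : ∀ s, ‖G s‖ ≤ B) :
    Real.sqrt (∫ s in Ioc (0:ℝ) 2, ‖G s‖ ^ 2) ≤ Real.sqrt 2 * B := by
  have h1 : (∫ s in Ioc (0:ℝ) 2, ‖G s‖ ^ 2) ≤ ∫ _ in Ioc (0:ℝ) 2, B ^ 2 := by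
    refine integral_mono_of_nonneg (Filter.Eventually.of_forall fun s => sq_nonneg _)
      ?_ (Filter.Eventually.of_forall fun s => ?_)
    · exact integrableOn_const (by simp [Real.volume_Ioc])
    · exact pow_le_pow_left₀ (norm_nonneg _) (hbd s) 2
  have h2 : (∫ _ in Ioc (0:ℝ) 2, B ^ 2 : ℝ) = 2 * B ^ 2 := by
    rw [setIntegral_const]
    simp [Real.volume_Ioc]
  calc Real.sqrt (∫ s in Ioc (0:ℝ) 2, ‖G s‖ ^ 2)
      ≤ Real.sqrt (2 * B ^ 2) := Real.sqrt_le_sqrt (h1.trans_eq h2)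
    _ = Real.sqrt 2 * B := by
        rw [Real.sqrt_mul (by norm_num), Real.sqrt_sq hB]

end Stmt12Aux

open Stmt12Aux

/-- The kernel-based autoconvolution operator `[F(x)](s) = ∫₀ˢ k(s,q) x(s-q) x(q) dq` with
continuous kernel is Fréchet differentiable at every `x₀ ∈ L²_ℂ(0,1)` with derivative
`[F'(x₀)h](s) = ∫₀ˢ (k(s,q)+k(s,s-q)) x₀(s-q) h(q) dq`, a bounded linear operator from
`L²_ℂ(0,1)` to `L²_ℂ(0,2)`. -/
theorem stmt12 (k : ℝ → ℝ → ℂ)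
    (hk : ContinuousOn (Function.uncurry k) (Icc (0:ℝ) 2 ×ˢ Icc (0:ℝ) 1))
    (hk0 : ∀ s q : ℝ, (s, q) ∉ Icc (0:ℝ) 2 ×ˢ Icc (0:ℝ) 1 → k s q = 0)
    (F : (ℝ → ℂ) → ℝ → ℂ)
    (hF : ∀ x s, F x s = ∫ q in Ioc (0:ℝ) s, k s q * x (s - q) * x q)
    (F' : (ℝ → ℂ) → (ℝ → ℂ) → ℝ → ℂ)
    (hF' : ∀ x₀ h s, F' x₀ h s =
      ∫ q in Ioc (0:ℝ) s, (k s q + k s (s - q)) * x₀ (s - q) * h q)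
    (x₀ : ℝ → ℂ) (hx₀m : AEStronglyMeasurable x₀ volume)
    (hx₀ : MemLp x₀ 2 (volume.restrict (Ioc (0:ℝ) 1)))
    (hx₀0 : ∀ t : ℝ, t ∉ Icc (0:ℝ) 1 → x₀ t = 0) :
    -- linearity of `F'(x₀)`
    (∀ h₁ h₂ : ℝ → ℂ, AEStronglyMeasurable h₁ volume → AEStronglyMeasurable h₂ volume →
      MemLp h₁ 2 (volume.restrict (Ioc (0:ℝ) 1)) →
      MemLp h₂ 2 (volume.restrict (Ioc (0:ℝ) 1)) →
      (∀ t : ℝ, t ∉ Icc (0:ℝ) 1 → h₁ t = 0) → (∀ t : ℝ, t ∉ Icc (0:ℝ) 1 → h₂ t = 0) →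
      ∀ s : ℝ, F' x₀ (fun q => h₁ q + h₂ q) s = F' x₀ h₁ s + F' x₀ h₂ s) ∧
    (∀ (c : ℂ) (h : ℝ → ℂ), ∀ s : ℝ, F' x₀ (fun q => c * h q) s = c * F' x₀ h s) ∧
    -- boundedness of `F'(x₀)`
    (∃ C : ℝ, 0 ≤ C ∧ ∀ h : ℝ → ℂ, AEStronglyMeasurable h volume →
      MemLp h 2 (volume.restrict (Ioc (0:ℝ) 1)) →
      (∀ t : ℝ, t ∉ Icc (0:ℝ) 1 → h t = 0) →
      Real.sqrt (∫ s in Ioc (0:ℝ) 2, ‖F' x₀ h s‖^2)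
        ≤ C * Real.sqrt (∫ q in Ioc (0:ℝ) 1, ‖h q‖^2)) ∧
    -- Fréchet differentiability
    (∀ ε : ℝ, 0 < ε → ∃ δ : ℝ, 0 < δ ∧ ∀ h : ℝ → ℂ, AEStronglyMeasurable h volume →
      MemLp h 2 (volume.restrict (Ioc (0:ℝ) 1)) →
      (∀ t : ℝ, t ∉ Icc (0:ℝ) 1 → h t = 0) →
      Real.sqrt (∫ q in Ioc (0:ℝ) 1, ‖h q‖^2) ≤ δ →
      Real.sqrt (∫ s in Ioc (0:ℝ) 2,
          ‖F (fun q => x₀ q + h q) s - F x₀ s - F' x₀ h s‖^2)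
        ≤ ε * Real.sqrt (∫ q in Ioc (0:ℝ) 1, ‖h q‖^2)) := by
  have hx₀g : MemLp x₀ 2 (volume : Measure ℝ) := memLp_glob hx₀m hx₀ hx₀0
  obtain ⟨M₀, hM₀⟩ := (isCompact_Icc.prod isCompact_Icc).exists_bound_of_continuousOn hk
  set M : ℝ := max M₀ 0 with hMdef
  have hM : 0 ≤ M := le_max_right _ _
  have kb : ∀ s q : ℝ, ‖k s q‖ ≤ M := by
    intro s q
    by_cases hmem : (s, q) ∈ Icc (0:ℝ) 2 ×ˢ Icc (0:ℝ) 1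
    · exact le_trans (hM₀ (s, q) hmem) (le_max_left _ _)
    · rw [hk0 s q hmem]; simpa using hM
  have kmeas : ∀ s : ℝ, AEStronglyMeasurable (fun q => k s q) volume := by
    intro s
    by_cases hs : s ∈ Icc (0:ℝ) 2
    · have hco : ContinuousOn (fun q => k s q) (Icc (0:ℝ) 1) := by
        have hc : Continuous (fun q : ℝ => (s, q)) := by continuity
        exact hk.comp hc.continuousOn (fun q hq => ⟨hs, hq⟩)
      have he : (fun q => k s q) = (Icc (0:ℝ) 1).indicator (fun q => k s q) := by
        funext q; by_cases h : q ∈ Icc (0:ℝ) 1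
        · simp [indicator_of_mem h]
        · simp [indicator_of_notMem h, hk0 s q (fun hm => h (Set.mem_prod.mp hm).2)]
      rw [he]
      exact (aestronglyMeasurable_indicator_iff measurableSet_Icc).mpr
        (hco.aestronglyMeasurable measurableSet_Icc)
    · have he : (fun q => k s q) = fun _ => (0:ℂ) := by
        funext q; exact hk0 s q (fun hm => hs (Set.mem_prod.mp hm).1)
      rw [he]; exact aestronglyMeasurable_const
  have kmeas2 : ∀ s : ℝ, AEStronglyMeasurable (fun q => k s (s - q)) volume := fun s =>
    (kmeas s).comp_quasiMeasurePreserving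
      (Measure.measurePreserving_sub_left volume s).quasiMeasurePreserving
  have kb2 : ∀ s q : ℝ, ‖k s (s - q)‖ ≤ M := fun s q => kb s (s - q)
  have wb : ∀ s q : ℝ, ‖k s q + k s (s - q)‖ ≤ 2 * M := fun s q =>
    le_trans (norm_add_le _ _) (by linarith [kb s q, kb2 s q])
  refine ⟨?_, ?_, ?_, ?_⟩
  · -- additivity
    intro h₁ h₂ h₁m h₂m h₁2 h₂2 h₁0 h₂0 s
    have h₁g : MemLp h₁ 2 (volume : Measure ℝ) := memLp_glob h₁m h₁2 h₁0
    have h₂g : MemLp h₂ 2 (volume : Measure ℝ) := memLp_glob h₂m h₂2 h₂0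
    have wm : AEStronglyMeasurable (fun q => k s q + k s (s - q)) volume :=
      (kmeas s).add (kmeas2 s)
    have i1 := integrable_kernel s wm (wb s) hx₀g h₁g
    have i2 := integrable_kernel s wm (wb s) hx₀g h₂g
    simp only [hF']
    have key : (fun q : ℝ => (k s q + k s (s - q)) * x₀ (s - q) * (h₁ q + h₂ q))
        = fun q => (k s q + k s (s - q)) * x₀ (s - q) * h₁ q
          + (k s q + k s (s - q)) * x₀ (s - q) * h₂ q := funext fun q => by ring
    rw [key, integral_add i1 i2]
  · -- homogeneity
    intro c h s
    simp only [hF']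
    rw [← integral_const_mul]
    congr 1; funext q; ring
  · -- boundedness
    have hXnn : (0:ℝ) ≤ Real.sqrt (∫ q in Ioc (0:ℝ) 1, ‖x₀ q‖^2) := Real.sqrt_nonneg _
    refine ⟨Real.sqrt 2 * (2 * M * Real.sqrt (∫ q in Ioc (0:ℝ) 1, ‖x₀ q‖^2)),
      mul_nonneg (Real.sqrt_nonneg 2) (mul_nonneg (by linarith) hXnn), ?_⟩
    intro h hm h2 h0
    have hg : MemLp h 2 (volume : Measure ℝ) := memLp_glob hm h2 h0
    have hbd : ∀ s, ‖F' x₀ h s‖ ≤ 2 * M *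
        (Real.sqrt (∫ q in Ioc (0:ℝ) 1, ‖x₀ q‖^2) *
         Real.sqrt (∫ q in Ioc (0:ℝ) 1, ‖h q‖^2)) := by
      intro s
      rw [hF']
      exact cs_bound (wb s) hx₀g hx₀0 hg h0 s
    have hBnn : (0:ℝ) ≤ 2 * M * (Real.sqrt (∫ q in Ioc (0:ℝ) 1, ‖x₀ q‖^2) *
        Real.sqrt (∫ q in Ioc (0:ℝ) 1, ‖h q‖^2)) :=
      mul_nonneg (by linarith) (mul_nonneg hXnn (Real.sqrt_nonneg _))
    refine le_trans (l2_bound hBnn hbd) (le_of_eq (by ring))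
  · -- differentiability
    intro ε hε
    have hpos : (0:ℝ) < Real.sqrt 2 * M + 1 := by positivity
    refine ⟨ε / (Real.sqrt 2 * M + 1), div_pos hε hpos, ?_⟩
    intro h hm h2 h0 hNδ
    have hg : MemLp h 2 (volume : Measure ℝ) := memLp_glob hm h2 h0
    have hNnn : (0:ℝ) ≤ Real.sqrt (∫ q in Ioc (0:ℝ) 1, ‖h q‖^2) := Real.sqrt_nonneg _
    have key : ∀ s : ℝ, F (fun q => x₀ q + h q) s - F x₀ s - F' x₀ h s
        = ∫ q in Ioc (0:ℝ) s, k s q * h (s - q) * h q := by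
      intro s
      have iA := integrable_kernel s (kmeas s) (kb s) hx₀g hx₀g
      have iB1 := integrable_kernel s (kmeas s) (kb s) hx₀g hg
      have iB2 := integrable_kernel s (kmeas s) (kb s) hg hx₀g
      have iC := integrable_kernel s (kmeas s) (kb s) hg hg
      have iD := integrable_kernel s (kmeas2 s) (kb2 s) hx₀g hg
      have e1 : F (fun q => x₀ q + h q) s
          = (∫ q in Ioc (0:ℝ) s, k s q * x₀ (s - q) * x₀ q)
          + ((∫ q in Ioc (0:ℝ) s, k s q * x₀ (s - q) * h q)
          + ((∫ q in Ioc (0:ℝ) s, k s q * h (s - q) * x₀ q)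
          + (∫ q in Ioc (0:ℝ) s, k s q * h (s - q) * h q))) := by
        simp only [hF]
        have sp : (fun q : ℝ => k s q * (x₀ (s - q) + h (s - q)) * (x₀ q + h q))
            = fun q => k s q * x₀ (s - q) * x₀ q + (k s q * x₀ (s - q) * h q
              + (k s q * h (s - q) * x₀ q + k s q * h (s - q) * h q)) :=
          funext fun q => by ring
        have iBC : Integrable (fun q : ℝ => k s q * h (s - q) * x₀ q
            + k s q * h (s - q) * h q) (volume.restrict (Ioc (0:ℝ) s)) := iB2.add iC
        have iBBC : Integrable (fun q : ℝ => k s q * x₀ (s - q) * h q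
            + (k s q * h (s - q) * x₀ q + k s q * h (s - q) * h q))
            (volume.restrict (Ioc (0:ℝ) s)) := iB1.add iBC
        rw [sp, integral_add iA iBBC, integral_add iB1 iBC, integral_add iB2 iC]
      have e2 : F x₀ s = ∫ q in Ioc (0:ℝ) s, k s q * x₀ (s - q) * x₀ q := hF x₀ s
      have e3 : F' x₀ h s = (∫ q in Ioc (0:ℝ) s, k s q * x₀ (s - q) * h q)
          + (∫ q in Ioc (0:ℝ) s, k s q * h (s - q) * x₀ q) := by
        rw [hF']
        have sp : (fun q : ℝ => (k s q + k s (s - q)) * x₀ (s - q) * h q)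
            = fun q => k s q * x₀ (s - q) * h q + k s (s - q) * x₀ (s - q) * h q :=
          funext fun q => by ring
        rw [sp, integral_add iB1 iD]
        congr 1
        have hrefl := integral_refl (fun q => k s q * h (s - q) * x₀ q) s
        simp only [sub_sub_cancel] at hrefl
        rw [← hrefl]
        congr 1; funext q; ring
      rw [e1, e2, e3]; ring
    have hbd : ∀ s, ‖F (fun q => x₀ q + h q) s - F x₀ s - F' x₀ h s‖
        ≤ M * (Real.sqrt (∫ q in Ioc (0:ℝ) 1, ‖h q‖^2) *
               Real.sqrt (∫ q in Ioc (0:ℝ) 1, ‖h q‖^2)) := by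
      intro s
      rw [key s]
      exact cs_bound (kb s) hg h0 hg h0 s
    have hBnn : (0:ℝ) ≤ M * (Real.sqrt (∫ q in Ioc (0:ℝ) 1, ‖h q‖^2) *
        Real.sqrt (∫ q in Ioc (0:ℝ) 1, ‖h q‖^2)) :=
      mul_nonneg hM (mul_nonneg hNnn hNnn)
    refine le_trans (l2_bound hBnn hbd) ?_
    set N := Real.sqrt (∫ q in Ioc (0:ℝ) 1, ‖h q‖^2) with hNdef
    have hd : N * (Real.sqrt 2 * M + 1) ≤ ε := (le_div_iff₀ hpos).mp hNδ
    have hs2 : (0:ℝ) ≤ Real.sqrt 2 := Real.sqrt_nonneg 2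
    nlinarith [mul_le_mul_of_nonneg_right hd hNnn]
end

section
/- Let k : [0,2]×[0,1] → ℂ be bounded measurable with |k| ≤ k_max and let F be the kernel-based autoconvolution operator. Then for all x, h ∈ L²_ℂ(0,1), ‖F(x+h) − F(x) − F′(x)h‖_{L²_ℂ(0,2)} ≤ √2 · k_max · ‖h‖²_{L²_ℂ(0,1)}, where [F′(x)h](s) = ∫₀ˢ (k(s,q)+k(s,s−q))x(s−q)h(q)dq. -/
open MeasureTheory Set

/-- L² times L² is integrable (complex version). -/
lemma aux_mul_int {f g : ℝ → ℂ} (hf : MemLp f 2 volume) (hg : MemLp g 2 volume) :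
    Integrable (fun q => f q * g q) volume := by
  have h := hg.smul (φ := f) hf (r := 1)
    (hpqr := ⟨by rw [inv_one]; exact ENNReal.inv_two_add_inv_two⟩)
  exact memLp_one_iff_integrable.mp h

/-- L² times L² is integrable (real version). -/
lemma aux_mul_int_real {f g : ℝ → ℝ} (hf : MemLp f 2 volume) (hg : MemLp g 2 volume) :
    Integrable (fun q => f q * g q) volume := by
  have h := hg.smul (φ := f) hf (r := 1)
    (hpqr := ⟨by rw [inv_one]; exact ENNReal.inv_two_add_inv_two⟩)
  exact memLp_one_iff_integrable.mp h

/-- Globalize `MemLp` for a function vanishing outside `Icc 0 1`. -/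
lemma aux_memLp_global {f : ℝ → ℂ} (hf : MemLp f 2 (volume.restrict (Ioc (0:ℝ) 1)))
    (hf0 : ∀ t : ℝ, t ∉ Icc (0:ℝ) 1 → f t = 0) : MemLp f 2 volume := by
  have hfe : f = (Icc (0:ℝ) 1).indicator f := by
    funext t
    by_cases ht : t ∈ Icc (0:ℝ) 1
    · simp [Set.indicator_apply, ht]
    · simp [Set.indicator_apply, ht, hf0 t ht]
  rw [hfe]
  rw [memLp_indicator_iff_restrict measurableSet_Icc]
  rwa [Measure.restrict_congr_set Ioc_ae_eq_Icc] at hf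

/-- Quadratic remainder estimate: for bounded measurable kernel `|k| ≤ k_max`,
`‖F(x+h) − F(x) − F'(x)h‖_{L²(0,2)} ≤ √2 k_max ‖h‖²_{L²(0,1)}`. -/
theorem stmt13 (k : ℝ → ℝ → ℂ) (kmax : ℝ)
    (hkm : Measurable (Function.uncurry k))
    (hkb : ∀ s q : ℝ, ‖k s q‖ ≤ kmax)
    (x h : ℝ → ℂ)
    (hxm : AEStronglyMeasurable x volume) (hhm : AEStronglyMeasurable h volume)
    (hx : MemLp x 2 (volume.restrict (Ioc (0:ℝ) 1)))
    (hh : MemLp h 2 (volume.restrict (Ioc (0:ℝ) 1)))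
    (hx0 : ∀ t : ℝ, t ∉ Icc (0:ℝ) 1 → x t = 0)
    (hh0 : ∀ t : ℝ, t ∉ Icc (0:ℝ) 1 → h t = 0) :
    Real.sqrt (∫ s in Ioc (0:ℝ) 2,
        ‖(∫ q in Ioc (0:ℝ) s, k s q * (x (s - q) + h (s - q)) * (x q + h q))
          - (∫ q in Ioc (0:ℝ) s, k s q * x (s - q) * x q)
          - (∫ q in Ioc (0:ℝ) s, (k s q + k s (s - q)) * x (s - q) * h q)‖^2)
      ≤ Real.sqrt 2 * kmax * (∫ q in Ioc (0:ℝ) 1, ‖h q‖^2) := by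
  have k0 : (0:ℝ) ≤ kmax := le_trans (norm_nonneg _) (hkb 0 0)
  set N : ℝ := ∫ q in Ioc (0:ℝ) 1, ‖h q‖^2 with hNdef
  have hN0 : 0 ≤ N := by
    apply integral_nonneg; intro q; positivity
  have hX2 : MemLp x 2 volume := aux_memLp_global hx hx0
  have hH2 : MemLp h 2 volume := aux_memLp_global hh hh0
  -- shifted functions
  have hXs : ∀ s : ℝ, MemLp (fun q => x (s - q)) 2 volume := fun s =>
    hX2.comp_measurePreserving (Measure.measurePreserving_sub_left volume s)
  have hHs : ∀ s : ℝ, MemLp (fun q => h (s - q)) 2 volume := fun s =>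
    hH2.comp_measurePreserving (Measure.measurePreserving_sub_left volume s)
  -- the global L² integral of ‖h‖² equals N
  have hNint : ∫ q : ℝ, ‖h q‖^2 = N := by
    have he : (fun q : ℝ => ‖h q‖^2) = (Icc (0:ℝ) 1).indicator (fun q => ‖h q‖^2) := by
      funext t
      by_cases ht : t ∈ Icc (0:ℝ) 1
      · simp [Set.indicator_apply, ht]
      · simp [Set.indicator_apply, ht, hh0 t ht]
    rw [he, integral_indicator measurableSet_Icc, integral_Icc_eq_integral_Ioc]
  -- Cauchy-Schwarz bound
  have CS : ∀ s : ℝ, ∫ q : ℝ, ‖h (s - q)‖ * ‖h q‖ ≤ N := by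
    intro s
    have conj : (2:ℝ).HolderConjugate 2 := ⟨by norm_num, by norm_num, by norm_num⟩
    have h2 : ENNReal.ofReal (2:ℝ) = 2 := by norm_num
    have hf2 : MemLp (fun q => ‖h (s - q)‖) (ENNReal.ofReal (2:ℝ)) volume := by
      rw [h2]; exact (hHs s).norm
    have hg2 : MemLp (fun q => ‖h q‖) (ENNReal.ofReal (2:ℝ)) volume := by
      rw [h2]; exact hH2.norm
    have hCS := integral_mul_le_Lp_mul_Lq_of_nonneg (μ := volume) conj
      (ae_of_all _ fun q => norm_nonneg _) (ae_of_all _ fun q => norm_nonneg _) hf2 hg2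
    have hrpow : ∀ a : ℝ, a ^ (2:ℝ) = a ^ 2 := fun a => by
      rw [show (2:ℝ) = ((2:ℕ):ℝ) by norm_num, Real.rpow_natCast]
    simp only [hrpow] at hCS
    have hsub : ∫ q : ℝ, ‖h (s - q)‖ ^ 2 = ∫ q : ℝ, ‖h q‖ ^ 2 :=
      integral_sub_left_eq_self (fun q => ‖h q‖ ^ 2) volume s
    rw [hsub, hNint] at hCS
    calc ∫ q : ℝ, ‖h (s - q)‖ * ‖h q‖ ≤ N ^ ((1:ℝ)/2) * N ^ ((1:ℝ)/2) := hCS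
      _ = Real.sqrt N * Real.sqrt N := by rw [← Real.sqrt_eq_rpow]
      _ = N := Real.mul_self_sqrt hN0
  -- kernel measurability
  have hK1 : ∀ s : ℝ, Measurable fun q : ℝ => k s q := fun s =>
    hkm.comp (measurable_const.prodMk measurable_id)
  have hK2 : ∀ s : ℝ, Measurable fun q : ℝ => k s (s - q) := fun s =>
    hkm.comp (measurable_const.prodMk (measurable_const.sub measurable_id))
  -- integrability of kernel-weighted products
  have hint : ∀ (s : ℝ) (K : ℝ → ℂ) (f g : ℝ → ℂ), Measurable K → (∀ q, ‖K q‖ ≤ kmax) →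
      MemLp f 2 volume → MemLp g 2 volume →
      Integrable (fun q => K q * f q * g q) (volume.restrict (Ioc (0:ℝ) s)) := by
    intro s K f g hKm hKb hf hg
    have h1 : Integrable (fun q => K q * (f q * g q)) volume :=
      (aux_mul_int hf hg).bdd_mul hKm.aestronglyMeasurable (ae_of_all _ hKb)
    simp_rw [← mul_assoc] at h1
    exact h1.integrableOn
  -- the key algebraic identity
  have key : ∀ s : ℝ,
      (∫ q in Ioc (0:ℝ) s, k s q * (x (s - q) + h (s - q)) * (x q + h q))
        - (∫ q in Ioc (0:ℝ) s, k s q * x (s - q) * x q)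
        - (∫ q in Ioc (0:ℝ) s, (k s q + k s (s - q)) * x (s - q) * h q)
      = ∫ q in Ioc (0:ℝ) s, k s q * h (s - q) * h q := by
    intro s
    have iA := hint s _ _ _ (hK1 s) (hkb s) (hXs s) hX2
    have iB := hint s _ _ _ (hK1 s) (hkb s) (hXs s) hH2
    have iC := hint s _ _ _ (hK1 s) (hkb s) (hHs s) hX2
    have iD := hint s _ _ _ (hK1 s) (hkb s) (hHs s) hH2
    have iE : Integrable (fun q => k s (s - q) * x (s - q) * h q)
        (volume.restrict (Ioc (0:ℝ) s)) :=
      hint s (fun q => k s (s - q)) _ _ (hK2 s) (fun q => hkb s (s - q)) (hXs s) hH2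
    have iCD : Integrable (fun q => k s q * h (s - q) * x q + k s q * h (s - q) * h q)
        (volume.restrict (Ioc (0:ℝ) s)) := iC.add iD
    have iBCD : Integrable (fun q => k s q * x (s - q) * h q
        + (k s q * h (s - q) * x q + k s q * h (s - q) * h q))
        (volume.restrict (Ioc (0:ℝ) s)) := iB.add iCD
    have hI1 : (∫ q in Ioc (0:ℝ) s, k s q * (x (s - q) + h (s - q)) * (x q + h q))
        = (∫ q in Ioc (0:ℝ) s, k s q * x (s - q) * x q)
          + ((∫ q in Ioc (0:ℝ) s, k s q * x (s - q) * h q)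
          + ((∫ q in Ioc (0:ℝ) s, k s q * h (s - q) * x q)
          + (∫ q in Ioc (0:ℝ) s, k s q * h (s - q) * h q))) := by
      rw [← integral_add iC iD, ← integral_add iB iCD, ← integral_add iA iBCD]
      exact integral_congr_ae (ae_of_all _ fun q => by ring)
    have hI3 : (∫ q in Ioc (0:ℝ) s, (k s q + k s (s - q)) * x (s - q) * h q)
        = (∫ q in Ioc (0:ℝ) s, k s q * x (s - q) * h q)
          + (∫ q in Ioc (0:ℝ) s, k s (s - q) * x (s - q) * h q) := by
      rw [← integral_add iB iE]
      exact integral_congr_ae (ae_of_all _ fun q => by ring)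
    have hEC : (∫ q in Ioc (0:ℝ) s, k s (s - q) * x (s - q) * h q)
        = ∫ q in Ioc (0:ℝ) s, k s q * h (s - q) * x q := by
      set F : ℝ → ℂ := fun t => k s t * x t * h (s - t) with hF
      have step1 : (∫ q in Ioc (0:ℝ) s, k s (s - q) * x (s - q) * h q)
          = ∫ q in Ioc (0:ℝ) s, F (s - q) := by
        refine integral_congr_ae (ae_of_all _ fun q => ?_)
        simp only [hF, sub_sub_cancel]
      have step2 : (∫ q in Ioc (0:ℝ) s, F (s - q))
          = ∫ q : ℝ, (Ico (0:ℝ) s).indicator F (s - q) := by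
        rw [← integral_indicator measurableSet_Ioc]
        refine integral_congr_ae (ae_of_all _ fun q => ?_)
        have hmem : q ∈ Ioc (0:ℝ) s ↔ s - q ∈ Ico (0:ℝ) s := by
          rw [mem_Ioc, mem_Ico]
          constructor
          · rintro ⟨h1, h2⟩; exact ⟨by linarith, by linarith⟩
          · rintro ⟨h1, h2⟩; exact ⟨by linarith, by linarith⟩
        simp only [Set.indicator_apply]
        rw [if_congr hmem rfl rfl]
      have step3 : (∫ q : ℝ, (Ico (0:ℝ) s).indicator F (s - q))
          = ∫ q : ℝ, (Ico (0:ℝ) s).indicator F q :=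
        integral_sub_left_eq_self ((Ico (0:ℝ) s).indicator F) volume s
      rw [step1, step2, step3, integral_indicator measurableSet_Ico,
        restrict_Ico_eq_restrict_Ioc]
      exact integral_congr_ae (ae_of_all _ fun q => by simp only [hF]; ring)
    rw [hI1, hI3, hEC]
    ring
  -- the pointwise bound
  have bnd : ∀ s : ℝ, ‖∫ q in Ioc (0:ℝ) s, k s q * h (s - q) * h q‖ ≤ kmax * N := by
    intro s
    have iD' : Integrable (fun q => ‖h (s - q)‖ * ‖h q‖) volume :=
      aux_mul_int_real (hHs s).norm hH2.norm
    calc ‖∫ q in Ioc (0:ℝ) s, k s q * h (s - q) * h q‖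
        ≤ ∫ q in Ioc (0:ℝ) s, ‖k s q * h (s - q) * h q‖ := norm_integral_le_integral_norm _
      _ ≤ ∫ q in Ioc (0:ℝ) s, kmax * (‖h (s - q)‖ * ‖h q‖) := by
          refine integral_mono_of_nonneg (ae_of_all _ fun q => norm_nonneg _)
            ((iD'.const_mul kmax).integrableOn) (ae_of_all _ fun q => ?_)
          simp only [norm_mul, mul_assoc]
          exact mul_le_mul_of_nonneg_right (hkb s q) (by positivity)
      _ = kmax * ∫ q in Ioc (0:ℝ) s, ‖h (s - q)‖ * ‖h q‖ := integral_const_mul _ _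
      _ ≤ kmax * ∫ q : ℝ, ‖h (s - q)‖ * ‖h q‖ :=
          mul_le_mul_of_nonneg_left
            (setIntegral_le_integral iD' (ae_of_all _ fun q => by positivity)) k0
      _ ≤ kmax * N := mul_le_mul_of_nonneg_left (CS s) k0
  -- combine
  have hbig : ∀ s : ℝ,
      ‖(∫ q in Ioc (0:ℝ) s, k s q * (x (s - q) + h (s - q)) * (x q + h q))
        - (∫ q in Ioc (0:ℝ) s, k s q * x (s - q) * x q)
        - (∫ q in Ioc (0:ℝ) s, (k s q + k s (s - q)) * x (s - q) * h q)‖^2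
      ≤ (kmax * N)^2 := by
    intro s
    rw [key s]
    exact pow_le_pow_left₀ (norm_nonneg _) (bnd s) 2
  have hintmono : (∫ s in Ioc (0:ℝ) 2,
      ‖(∫ q in Ioc (0:ℝ) s, k s q * (x (s - q) + h (s - q)) * (x q + h q))
        - (∫ q in Ioc (0:ℝ) s, k s q * x (s - q) * x q)
        - (∫ q in Ioc (0:ℝ) s, (k s q + k s (s - q)) * x (s - q) * h q)‖^2)
      ≤ ∫ _ in Ioc (0:ℝ) 2, (kmax * N)^2 := by
    refine integral_mono_of_nonneg (ae_of_all _ fun s => by positivity) ?_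
      (ae_of_all _ fun s => hbig s)
    exact integrableOn_const (by simp [Real.volume_Ioc])
  have hconst : (∫ _ in Ioc (0:ℝ) 2, (kmax * N)^2) = 2 * (kmax * N)^2 := by
    rw [setIntegral_const, Real.volume_real_Ioc, smul_eq_mul]
    norm_num
  calc Real.sqrt (∫ s in Ioc (0:ℝ) 2,
        ‖(∫ q in Ioc (0:ℝ) s, k s q * (x (s - q) + h (s - q)) * (x q + h q))
          - (∫ q in Ioc (0:ℝ) s, k s q * x (s - q) * x q)
          - (∫ q in Ioc (0:ℝ) s, (k s q + k s (s - q)) * x (s - q) * h q)‖^2)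
      ≤ Real.sqrt (2 * (kmax * N)^2) := Real.sqrt_le_sqrt (hintmono.trans_eq hconst)
    _ = Real.sqrt 2 * kmax * N := by
        rw [Real.sqrt_mul (by norm_num), Real.sqrt_sq (by positivity), ← mul_assoc]
end
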